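/- arXiv:2509.08936 — 2 statements merged into one kernel-verified Lean document; each statement's English description precedes it below -/
import Mathlib

section
/- Let d ≥ 2 and let p ∈ ℙ^d, v ∈ (ℙ^{d-1})². Then (p, v) belongs to the quasi-Trefftz space 𝕊_d (defined by 𝒯_{d-1}(-iωρ v_x + ∂_x p) = 0, 𝒯_{d-1}(-iωρ v_y + ∂_y p) = 0, 𝒯_{d-2}(-(iω/(ρc²)) p + ∇·v) = 0 at x₀) if and only if 𝒯_{d-2}(-Δp - (ω²/c²)p) = 0 and iωρ v = ∇p. -/
open MvPolynomial Complex

/-- Partial derivative in direction `i` of a function on `ℝ × ℝ`. -/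
noncomputable def pd (i : Fin 2) (f : ℝ × ℝ → ℂ) : ℝ × ℝ → ℂ :=
  fun x => fderiv ℝ f x (if i = 0 then ((1 : ℝ), (0 : ℝ)) else ((0 : ℝ), (1 : ℝ)))

/-- `taylorZero q f x₀` says that the Taylor truncation of order `q` of `f` at `x₀`
vanishes, i.e. all partial derivatives of `f` of total order `≤ q` vanish at `x₀`. -/
noncomputable def taylorZero (q : ℕ) (f : ℝ × ℝ → ℂ) (x₀ : ℝ × ℝ) : Prop :=
  ∀ a b : ℕ, a + b ≤ q → (pd 0)^[a] ((pd 1)^[b] f) x₀ = 0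

/-- Evaluation of a two-variable complex polynomial at a real point. -/
noncomputable def pev (p : MvPolynomial (Fin 2) ℂ) (x : ℝ × ℝ) : ℂ :=
  MvPolynomial.eval ![(x.1 : ℂ), (x.2 : ℂ)] p

namespace QTaux

noncomputable def dmap (A B : ℂ) : (ℝ × ℝ) →L[ℝ] ℂ :=
  A • (Complex.ofRealCLM.comp (ContinuousLinearMap.fst ℝ ℝ ℝ)) +
  B • (Complex.ofRealCLM.comp (ContinuousLinearMap.snd ℝ ℝ ℝ))

lemma dmap_apply (A B : ℂ) (v : ℝ × ℝ) : dmap A B v = A * v.1 + B * v.2 := by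
  simp [dmap, smul_eq_mul]

lemma fin2_cases (i : Fin 2) : i = 0 ∨ i = 1 := by
  fin_cases i
  · exact Or.inl rfl
  · exact Or.inr rfl

lemma dmap_add (A B A' B' : ℂ) : dmap (A + A') (B + B') = dmap A B + dmap A' B' := by
  simp only [dmap]; module

lemma smul_dmap (z A B : ℂ) : z • dmap A B = dmap (z * A) (z * B) := by
  simp only [dmap, smul_add, smul_smul]

lemma hasFDerivAt_pev_X (i : Fin 2) (x : ℝ × ℝ) :
    HasFDerivAt (pev (X i)) (dmap (pev (pderiv 0 (X i)) x) (pev (pderiv 1 (X i)) x)) x := by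
  rcases fin2_cases i with rfl | rfl
  · have h : pev (X (0 : Fin 2)) = fun y : ℝ × ℝ => ((y.1 : ℂ)) := by
      funext y; simp [pev]
    rw [h]
    have : dmap (pev (pderiv 0 (X (0:Fin 2))) x) (pev (pderiv 1 (X (0:Fin 2))) x)
        = Complex.ofRealCLM.comp (ContinuousLinearMap.fst ℝ ℝ ℝ) := by
      rw [pderiv_X_self, pderiv_X_of_ne (by decide)]
      simp only [pev, dmap, eval_X, Matrix.cons_val_zero, Matrix.cons_val_one, Matrix.head_cons, map_zero, map_one]
      module
    rw [this]
    exact (Complex.ofRealCLM.comp (ContinuousLinearMap.fst ℝ ℝ ℝ)).hasFDerivAt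
  · have h : pev (X (1 : Fin 2)) = fun y : ℝ × ℝ => ((y.2 : ℂ)) := by
      funext y; simp [pev]
    rw [h]
    have : dmap (pev (pderiv 0 (X (1:Fin 2))) x) (pev (pderiv 1 (X (1:Fin 2))) x)
        = Complex.ofRealCLM.comp (ContinuousLinearMap.snd ℝ ℝ ℝ) := by
      rw [pderiv_X_self, pderiv_X_of_ne (by decide)]
      simp only [pev, dmap, eval_X, Matrix.cons_val_zero, Matrix.cons_val_one, Matrix.head_cons, map_zero, map_one]
      module
    rw [this]
    exact (Complex.ofRealCLM.comp (ContinuousLinearMap.snd ℝ ℝ ℝ)).hasFDerivAt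

lemma hasFDerivAt_pev (p : MvPolynomial (Fin 2) ℂ) (x : ℝ × ℝ) :
    HasFDerivAt (pev p) (dmap (pev (pderiv 0 p) x) (pev (pderiv 1 p) x)) x := by
  induction p using MvPolynomial.induction_on with
  | C a =>
      have h : pev (C a : MvPolynomial (Fin 2) ℂ) = fun _ => a := by funext y; simp [pev]
      rw [h]
      have : dmap (pev (pderiv 0 (C a : MvPolynomial (Fin 2) ℂ)) x)
          (pev (pderiv 1 (C a : MvPolynomial (Fin 2) ℂ)) x) = 0 := by
        simp only [pderiv_C, pev, map_zero, dmap]; module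
      rw [this]; exact hasFDerivAt_const _ _
  | add p q hp hq =>
      have h : pev (p + q) = fun y => pev p y + pev q y := by funext y; simp [pev]
      rw [h]
      have : dmap (pev (pderiv 0 (p + q)) x) (pev (pderiv 1 (p + q)) x)
          = dmap (pev (pderiv 0 p) x) (pev (pderiv 1 p) x)
            + dmap (pev (pderiv 0 q) x) (pev (pderiv 1 q) x) := by
        rw [← dmap_add]; simp [pev]
      rw [this]; exact hp.add hq
  | mul_X p i hp =>
      have h : pev (p * X i) = fun y => pev p y * pev (X i) y := by funext y; simp [pev]
      rw [h]
      have key := hp.mul (hasFDerivAt_pev_X i x)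
      refine HasFDerivAt.congr_fderiv key ?_
      symm
      rw [smul_dmap, smul_dmap, ← dmap_add]
      congr 1 <;>
      · simp only [pderiv_mul, pev, map_add, map_mul]
        ring

lemma pd_pev (i : Fin 2) (p : MvPolynomial (Fin 2) ℂ) : pd i (pev p) = pev (pderiv i p) := by
  funext x
  have h := (hasFDerivAt_pev p x).fderiv
  rcases fin2_cases i with rfl | rfl <;> simp [pd, h, dmap_apply]

noncomputable def P (i : Fin 2) : MvPolynomial (Fin 2) ℂ → MvPolynomial (Fin 2) ℂ :=
  fun q => pderiv i q

lemma pd_iter_pev (i : Fin 2) (n : ℕ) (p : MvPolynomial (Fin 2) ℂ) :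
    (pd i)^[n] (pev p) = pev ((P i)^[n] p) := by
  induction n generalizing p with
  | zero => rfl
  | succ k ih =>
      rw [Function.iterate_succ_apply, Function.iterate_succ_apply, pd_pev, ih]
      rfl

lemma taylor_iter_pev (a b : ℕ) (p : MvPolynomial (Fin 2) ℂ) :
    (pd 0)^[a] ((pd 1)^[b] (pev p)) = pev ((P 0)^[a] ((P 1)^[b] p)) := by
  rw [pd_iter_pev, pd_iter_pev]




lemma coeff_pderiv' (i : Fin 2) (m : Fin 2 →₀ ℕ) (q : MvPolynomial (Fin 2) ℂ) :
    coeff m (pderiv i q) = ((m i : ℂ) + 1) * coeff (m + Finsupp.single i 1) q := by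
  induction q using MvPolynomial.induction_on' with
  | add p q hp hq => simp [map_add, coeff_add, hp, hq, mul_add]
  | monomial s a =>
      rw [pderiv_monomial, coeff_monomial, coeff_monomial]
      split_ifs with h1 h2 h2
      · subst h2
        have hsi : ((m + Finsupp.single i 1 : Fin 2 →₀ ℕ)) i = m i + 1 := by
          simp [Finsupp.add_apply, Finsupp.single_apply]
        rw [hsi]; push_cast; ring
      · by_cases hs : s i = 0
        · simp [hs]
        · exfalso; apply h2
          rw [← h1, tsub_add_cancel_of_le]
          exact Finsupp.single_le_iff.mpr (by omega)
      · exfalso; apply h1; subst h2; exact add_tsub_cancel_right _ _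
      · simp

lemma pderiv_comm' (i j : Fin 2) (q : MvPolynomial (Fin 2) ℂ) :
    pderiv i (pderiv j q) = pderiv j (pderiv i q) := by
  rcases eq_or_ne i j with rfl | hij
  · rfl
  · ext m
    rw [coeff_pderiv', coeff_pderiv', coeff_pderiv', coeff_pderiv']
    have h1 : ((m + Finsupp.single i 1 : Fin 2 →₀ ℕ)) j = m j := by
      simp [Finsupp.add_apply, Finsupp.single_apply, hij]
    have h2 : ((m + Finsupp.single j 1 : Fin 2 →₀ ℕ)) i = m i := by
      simp [Finsupp.add_apply, Finsupp.single_apply, hij.symm]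
    rw [h1, h2, add_right_comm]
    ring

lemma coeff_eq_zero_of_totalDegree_lt {r : MvPolynomial (Fin 2) ℂ} {n : ℕ}
    (h : r.totalDegree ≤ n) {m : Fin 2 →₀ ℕ} (hm : n < m.sum fun _ e => e) :
    coeff m r = 0 := by
  by_contra hne
  have := le_totalDegree (p := r) (s := m) (MvPolynomial.mem_support_iff.mpr hne)
  omega

lemma sum_add_single (m : Fin 2 →₀ ℕ) (i : Fin 2) :
    ((m + Finsupp.single i 1).sum fun _ e => e) = (m.sum fun _ e => e) + 1 := by
  rw [Finsupp.sum_add_index' (fun _ => rfl) (fun _ _ _ => rfl),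
    Finsupp.sum_single_index rfl]

lemma totalDegree_pderiv_le (i : Fin 2) {r : MvPolynomial (Fin 2) ℂ} {n : ℕ}
    (h : r.totalDegree ≤ n + 1) : (pderiv i r).totalDegree ≤ n := by
  have : ∀ m ∈ (pderiv i r).support, (m.sum fun _ e => e) ≤ n := by
    intro m hm
    have hne : coeff m (pderiv i r) ≠ 0 := MvPolynomial.mem_support_iff.mp hm
    rw [coeff_pderiv'] at hne
    have hc : coeff (m + Finsupp.single i 1) r ≠ 0 := by
      intro h0; rw [h0, mul_zero] at hne; exact hne rfl
    have := le_totalDegree (p := r) (MvPolynomial.mem_support_iff.mpr hc)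
    rw [sum_add_single] at this
    omega
  exact Finset.sup_le this

lemma sum_pos_of_ne_zero {m : Fin 2 →₀ ℕ} (hm : m ≠ 0) : 0 < m.sum fun _ e => e := by
  obtain ⟨i, hi⟩ := Finsupp.ne_iff.mp hm
  simp only [Finsupp.coe_zero, Pi.zero_apply] at hi
  have hmem : i ∈ m.support := Finsupp.mem_support_iff.mpr hi
  have : m i ≤ m.sum fun _ e => e := by
    rw [Finsupp.sum]
    exact Finset.single_le_sum (fun _ _ => Nat.zero_le _) hmem
  omega

lemma eq_C_of_totalDegree_le_zero {r : MvPolynomial (Fin 2) ℂ}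
    (h : r.totalDegree ≤ 0) : r = C (coeff 0 r) := by
  ext m
  rcases eq_or_ne m 0 with rfl | hm
  · simp
  · rw [coeff_C, if_neg (fun hh => hm hh.symm)]
    exact coeff_eq_zero_of_totalDegree_lt h (sum_pos_of_ne_zero hm)

lemma eq_C_of_pderiv_eq_zero {r : MvPolynomial (Fin 2) ℂ}
    (h0 : pderiv 0 r = 0) (h1 : pderiv 1 r = 0) : r = C (coeff 0 r) := by
  ext m
  rcases eq_or_ne m 0 with rfl | hm
  · simp
  · rw [coeff_C, if_neg (fun hh => hm hh.symm)]
    obtain ⟨i, hi⟩ := Finsupp.ne_iff.mp hm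
    simp only [Finsupp.coe_zero, Pi.zero_apply] at hi
    have hmm : (m - Finsupp.single i 1) + Finsupp.single i 1 = m :=
      tsub_add_cancel_of_le (Finsupp.single_le_iff.mpr (by omega))
    have hz : pderiv i r = 0 := by fin_cases i <;> assumption
    have hcp := coeff_pderiv' i (m - Finsupp.single i 1) r
    rw [hmm, hz, coeff_zero] at hcp
    have hne : (((((m - Finsupp.single i 1 : Fin 2 →₀ ℕ)) i : ℕ) : ℂ) + 1) ≠ 0 :=
      Nat.cast_add_one_ne_zero _
    exact ((mul_eq_zero.mp hcp.symm).resolve_left hne)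



lemma P_apply (i : Fin 2) (q : MvPolynomial (Fin 2) ℂ) : P i q = pderiv i q := rfl

lemma iter_comm (j i : Fin 2) (b : ℕ) (q : MvPolynomial (Fin 2) ℂ) :
    (P j)^[b] (pderiv i q) = pderiv i ((P j)^[b] q) := by
  induction b generalizing q with
  | zero => rfl
  | succ k ih =>
      rw [Function.iterate_succ_apply, Function.iterate_succ_apply,
        show (P j) (pderiv i q) = pderiv i (P j q) from pderiv_comm' j i q, ih]

lemma taylorZero_pev_zero (n : ℕ) (x₀ : ℝ × ℝ) :
    taylorZero n (pev (0 : MvPolynomial (Fin 2) ℂ)) x₀ := by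
  intro a b _
  rw [taylor_iter_pev]
  have h1 : (P 1)^[b] (0 : MvPolynomial (Fin 2) ℂ) = 0 :=
    Function.iterate_fixed (by simp [P_apply]) b
  have h0 : (P 0)^[a] (0 : MvPolynomial (Fin 2) ℂ) = 0 :=
    Function.iterate_fixed (by simp [P_apply]) a
  rw [h1, h0]; simp [pev]

lemma taylorZero_pev_eq_zero (x₀ : ℝ × ℝ) :
    ∀ (n : ℕ) (r : MvPolynomial (Fin 2) ℂ), r.totalDegree ≤ n →
      taylorZero n (pev r) x₀ → r = 0 := by
  intro n
  induction n with
  | zero =>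
      intro r hdeg htz
      have h00 := htz 0 0 le_rfl
      simp only [Function.iterate_zero, id] at h00
      rw [eq_C_of_totalDegree_le_zero hdeg] at h00 ⊢
      simp only [pev, eval_C] at h00
      rw [h00, map_zero]
  | succ n ih =>
      intro r hdeg htz
      have key : ∀ i : Fin 2, taylorZero n (pev (pderiv i r)) x₀ := by
        intro i a b hab
        rw [taylor_iter_pev, iter_comm]
        rcases fin2_cases i with rfl | rfl
        · have h : (P 0)^[a] (pderiv 0 ((P 1)^[b] r)) = (P 0)^[a+1] ((P 1)^[b] r) := by
            rw [Function.iterate_succ_apply, P_apply]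
          rw [h, ← taylor_iter_pev]
          exact htz (a+1) b (by omega)
        · have h : pderiv 1 ((P 1)^[b] r) = (P 1)^[b+1] r := by
            rw [Function.iterate_succ_apply', P_apply]
          rw [h, ← taylor_iter_pev]
          exact htz a (b+1) (by omega)
      have h0 : pderiv 0 r = 0 := ih _ (totalDegree_pderiv_le 0 hdeg) (key 0)
      have h1 : pderiv 1 r = 0 := ih _ (totalDegree_pderiv_le 1 hdeg) (key 1)
      have h00 := htz 0 0 (by omega)
      simp only [Function.iterate_zero, id] at h00
      rw [eq_C_of_pderiv_eq_zero h0 h1] at h00 ⊢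
      simp only [pev, eval_C] at h00
      rw [h00, map_zero]

lemma taylorZero_pev_iff (x₀ : ℝ × ℝ) {n : ℕ} {r : MvPolynomial (Fin 2) ℂ}
    (hdeg : r.totalDegree ≤ n) : taylorZero n (pev r) x₀ ↔ r = 0 := by
  constructor
  · exact taylorZero_pev_eq_zero x₀ n r hdeg
  · rintro rfl; exact taylorZero_pev_zero n x₀

lemma pd_const_mul (i : Fin 2) (a : ℂ) (ha : a ≠ 0) (f : ℝ × ℝ → ℂ) :
    pd i (fun x => a * f x) = fun x => a * pd i f x := by
  funext x
  by_cases h : DifferentiableAt ℝ f x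
  · simp only [pd]
    rw [fderiv_const_mul h a]
    simp
  · have h2 : ¬ DifferentiableAt ℝ (fun x => a * f x) x := by
      intro hcon
      have := hcon.const_mul a⁻¹
      simp only [← mul_assoc, inv_mul_cancel₀ ha, one_mul] at this
      exact h this
    simp only [pd, fderiv_zero_of_not_differentiableAt h,
      fderiv_zero_of_not_differentiableAt h2]
    simp

lemma taylorZero_const_mul (q : ℕ) (x₀ : ℝ × ℝ) (a : ℂ) (ha : a ≠ 0) (f : ℝ × ℝ → ℂ) :
    taylorZero q (fun x => a * f x) x₀ ↔ taylorZero q f x₀ := by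
  have key : ∀ (i : Fin 2) (n : ℕ) (g : ℝ × ℝ → ℂ),
      (pd i)^[n] (fun x => a * g x) = fun x => a * (pd i)^[n] g x := by
    intro i n
    induction n with
    | zero => intro g; rfl
    | succ k ihn =>
        intro g
        rw [Function.iterate_succ_apply, pd_const_mul i a ha, ihn,
          ← Function.iterate_succ_apply]
  have hrw : ∀ A B : ℕ, (pd 0)^[A] ((pd 1)^[B] (fun x => a * f x)) x₀
      = a * (pd 0)^[A] ((pd 1)^[B] f) x₀ := by
    intro A B
    rw [key 1, key 0]
  constructor <;> intro h A B hab
  · have := h A B hab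
    rw [hrw] at this
    exact (mul_eq_zero.mp this).resolve_left ha
  · rw [hrw, h A B hab, mul_zero]

end QTaux

/-- For `d ≥ 2`, `p ∈ ℙ^d`, `(v_x, v_y) ∈ (ℙ^{d-1})²`, membership in the
quasi-Trefftz space `𝕊_d` (the three truncated conditions of the first-order system at `x₀`)
is equivalent to `𝒯_{d-2}(-Δp - (ω²/c²)p) = 0` together with `iωρ v = ∇p`. -/
theorem quasiTrefftz_space_characterization
    (x₀ : ℝ × ℝ) (d : ℕ) (hd : 2 ≤ d)
    (ω ρ : ℝ) (hω : ω ≠ 0) (hρ : 0 < ρ)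
    (c : ℝ × ℝ → ℝ) (hc : ContDiffAt ℝ (d - 2) c x₀) (hc0 : c x₀ ≠ 0)
    (p vx vy : MvPolynomial (Fin 2) ℂ)
    (hp : p.totalDegree ≤ d) (hvx : vx.totalDegree ≤ d - 1) (hvy : vy.totalDegree ≤ d - 1) :
    (taylorZero (d - 1)
        (fun x => -(Complex.I * ω * ρ) * pev vx x + pd 0 (pev p) x) x₀ ∧
     taylorZero (d - 1)
        (fun x => -(Complex.I * ω * ρ) * pev vy x + pd 1 (pev p) x) x₀ ∧
     taylorZero (d - 2)
        (fun x => -(Complex.I * ω / (ρ * (c x : ℂ) ^ 2)) * pev p x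
            + pd 0 (pev vx) x + pd 1 (pev vy) x) x₀)
    ↔
    (taylorZero (d - 2)
        (fun x => -(pd 0 (pd 0 (pev p)) x + pd 1 (pd 1 (pev p)) x)
            - ((ω : ℂ) ^ 2 / (c x : ℂ) ^ 2) * pev p x) x₀ ∧
     C (Complex.I * ω * ρ) * vx = pderiv 0 p ∧
     C (Complex.I * ω * ρ) * vy = pderiv 1 p) := by
  have hωc : (ω : ℂ) ≠ 0 := by exact_mod_cast hω
  have hρc : (ρ : ℂ) ≠ 0 := by exact_mod_cast hρ.ne'
  have hKne : (Complex.I * (ω : ℂ) * (ρ : ℂ)) ≠ 0 :=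
    mul_ne_zero (mul_ne_zero Complex.I_ne_zero hωc) hρc
  set K : ℂ := Complex.I * (ω : ℂ) * (ρ : ℂ) with hKdef
  have hfun1 : ∀ (i : Fin 2) (w : MvPolynomial (Fin 2) ℂ),
      (fun x => -K * pev w x + pd i (pev p) x) = pev (pderiv i p - C K * w) := by
    intro i w
    funext x
    rw [QTaux.pd_pev]
    simp only [pev, map_sub, map_mul, eval_C]
    ring
  have hdegsub : ∀ (i : Fin 2) (w : MvPolynomial (Fin 2) ℂ), w.totalDegree ≤ d - 1 →
      (pderiv i p - C K * w).totalDegree ≤ d - 1 := by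
    intro i w hw
    refine le_trans (totalDegree_sub _ _) (max_le ?_ ?_)
    · exact QTaux.totalDegree_pderiv_le i (hp.trans (by omega))
    · refine le_trans (totalDegree_mul _ _) ?_
      simpa [totalDegree_C] using hw
  have hiff1 : taylorZero (d - 1) (fun x => -K * pev vx x + pd 0 (pev p) x) x₀ ↔
      C K * vx = pderiv 0 p := by
    rw [hfun1 0 vx, QTaux.taylorZero_pev_iff x₀ (hdegsub 0 vx hvx), sub_eq_zero, eq_comm]
  have hiff2 : taylorZero (d - 1) (fun x => -K * pev vy x + pd 1 (pev p) x) x₀ ↔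
      C K * vy = pderiv 1 p := by
    rw [hfun1 1 vy, QTaux.taylorZero_pev_iff x₀ (hdegsub 1 vy hvy), sub_eq_zero, eq_comm]
  have hiff3 : ∀ (_ : C K * vx = pderiv 0 p) (_ : C K * vy = pderiv 1 p),
      (taylorZero (d - 2)
        (fun x => -(Complex.I * ω / (ρ * (c x : ℂ) ^ 2)) * pev p x
            + pd 0 (pev vx) x + pd 1 (pev vy) x) x₀ ↔
       taylorZero (d - 2)
        (fun x => -(pd 0 (pd 0 (pev p)) x + pd 1 (pd 1 (pev p)) x)
            - ((ω : ℂ) ^ 2 / (c x : ℂ) ^ 2) * pev p x) x₀) := by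
    intro e1 e2
    have hvev : ∀ (i : Fin 2) (w : MvPolynomial (Fin 2) ℂ), C K * w = pderiv i p →
        pev w = fun x => K⁻¹ * pd i (pev p) x := by
      intro i w e
      funext x
      have h2 : K * pev w x = pev (pderiv i p) x := by
        have := congrArg (fun q => pev q x) e
        simpa only [pev, map_mul, eval_C] using this
      rw [QTaux.pd_pev, ← h2, ← mul_assoc, inv_mul_cancel₀ hKne, one_mul]
    have hpdvx : pd 0 (pev vx) = fun x => K⁻¹ * pd 0 (pd 0 (pev p)) x := by
      rw [hvev 0 vx e1]; exact QTaux.pd_const_mul 0 K⁻¹ (inv_ne_zero hKne) _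
    have hpdvy : pd 1 (pev vy) = fun x => K⁻¹ * pd 1 (pd 1 (pev p)) x := by
      rw [hvev 1 vy e2]; exact QTaux.pd_const_mul 1 K⁻¹ (inv_ne_zero hKne) _
    have hfun3 : (fun x => -(Complex.I * ω / (ρ * (c x : ℂ) ^ 2)) * pev p x
            + pd 0 (pev vx) x + pd 1 (pev vy) x)
        = fun x => (-K⁻¹) * (-(pd 0 (pd 0 (pev p)) x + pd 1 (pd 1 (pev p)) x)
            - ((ω : ℂ) ^ 2 / (c x : ℂ) ^ 2) * pev p x) := by
      funext x
      simp only [hpdvx, hpdvy]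
      by_cases hz : ((c x : ℝ) : ℂ) = 0
      · rw [hKdef]
        simp [hz]
        ring
      · have hKinv : K⁻¹ = -Complex.I * (ω : ℂ)⁻¹ * (ρ : ℂ)⁻¹ := by
          rw [hKdef, mul_inv, mul_inv, Complex.inv_I]
        rw [hKinv]
        field_simp [hz, hωc, hρc]
        ring
    rw [hfun3]
    exact QTaux.taylorZero_const_mul (d - 2) x₀ (-K⁻¹) (neg_ne_zero.mpr (inv_ne_zero hKne)) _
  constructor
  · rintro ⟨h1, h2, h3⟩
    have e1 := hiff1.mp h1
    have e2 := hiff2.mp h2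
    exact ⟨(hiff3 e1 e2).mp h3, e1, e2⟩
  · rintro ⟨hg, e1, e2⟩
    exact ⟨hiff1.mpr e1, hiff2.mpr e2, (hiff3 e1 e2).mpr hg⟩
end

section
/- The linear map Q : ℙ^d → ℙ^{d-2} defined by Q(p) = 𝒯_{d-2}(Δp + (ω²/c²) p) is surjective, hence dim ker Q = dim ℙ^d - dim ℙ^{d-2} = (d+1)(d+2)/2 - (d-1)d/2 = 2d+1. -/
open MvPolynomial Complex

namespace Helm

abbrev MP := MvPolynomial (Fin 2) ℂ

noncomputable def A0 : (ℝ × ℝ) →L[ℝ] ℂ := Complex.ofRealCLM.comp (ContinuousLinearMap.fst ℝ ℝ ℝ)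
noncomputable def A1 : (ℝ × ℝ) →L[ℝ] ℂ := Complex.ofRealCLM.comp (ContinuousLinearMap.snd ℝ ℝ ℝ)

@[simp] lemma A0_apply (v : ℝ × ℝ) : A0 v = (v.1 : ℂ) := rfl
@[simp] lemma A1_apply (v : ℝ × ℝ) : A1 v = (v.2 : ℂ) := rfl

lemma pev_hasFDerivAt (p : MP) : ∀ x : ℝ × ℝ,
    HasFDerivAt (pev p) ((pev (pderiv 0 p) x) • A0 + (pev (pderiv 1 p) x) • A1) x := by
  induction p using MvPolynomial.induction_on with
  | C a =>
    intro x
    have h1 : pev (MvPolynomial.C a) = fun _ : ℝ × ℝ => a := by funext y; simp [pev]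
    rw [h1]
    refine (hasFDerivAt_const (𝕜 := ℝ) a x).congr_fderiv ?_
    ext v <;> simp [pderiv_C, pev]
  | add p q hp hq =>
    intro x
    have h := (hp x).fun_add (hq x)
    have h1 : (fun y => pev p y + pev q y) = pev (p + q) := by funext y; simp [pev]
    rw [h1] at h
    refine h.congr_fderiv ?_
    ext v <;> simp [pev, map_add] <;> ring
  | mul_X p i hp =>
    intro x
    fin_cases i
    · have hX : HasFDerivAt (fun y : ℝ × ℝ => ((y.1 : ℝ) : ℂ)) A0 x := A0.hasFDerivAt
      have h := (hp x).fun_mul hX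
      have h1 : (fun y => pev p y * ((y.1 : ℝ) : ℂ)) = pev (p * X 0) := by
        funext y; simp [pev]
      rw [h1] at h
      refine h.congr_fderiv ?_
      ext v <;>
        simp [pev, pderiv_mul, pderiv_X, Pi.single_apply, map_add] <;> ring
    · have hX : HasFDerivAt (fun y : ℝ × ℝ => ((y.2 : ℝ) : ℂ)) A1 x := A1.hasFDerivAt
      have h := (hp x).fun_mul hX
      have h1 : (fun y => pev p y * ((y.2 : ℝ) : ℂ)) = pev (p * X 1) := by
        funext y; simp [pev]
      rw [h1] at h
      refine h.congr_fderiv ?_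
      ext v <;>
        simp [pev, pderiv_mul, pderiv_X, Pi.single_apply, map_add] <;> ring

lemma pev_differentiable (p : MP) : Differentiable ℝ (pev p) :=
  fun x => (pev_hasFDerivAt p x).differentiableAt

lemma pd_pev (i : Fin 2) (p : MP) : pd i (pev p) = pev (pderiv i p) := by
  funext x
  have h := (pev_hasFDerivAt p x).fderiv
  fin_cases i <;> simp only [pd, h] <;> simp

lemma pev_contDiff (n : WithTop ℕ∞) (p : MP) : ContDiff ℝ n (pev p) := by
  induction p using MvPolynomial.induction_on with
  | C a =>
    have h1 : pev (MvPolynomial.C a) = fun _ : ℝ × ℝ => a := by funext y; simp [pev]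
    rw [h1]; exact contDiff_const
  | add p q hp hq =>
    have h1 : pev (p + q) = fun y => pev p y + pev q y := by funext y; simp [pev]
    rw [h1]; exact hp.add hq
  | mul_X p i hp =>
    fin_cases i
    · show ContDiff ℝ n (pev (p * X 0))
      have h1 : pev (p * X 0) = fun y => pev p y * ((y.1 : ℝ) : ℂ) := by funext y; simp [pev]
      rw [h1]; exact hp.mul (A0.contDiff)
    · show ContDiff ℝ n (pev (p * X 1))
      have h1 : pev (p * X 1) = fun y => pev p y * ((y.2 : ℝ) : ℂ) := by funext y; simp [pev]
      rw [h1]; exact hp.mul (A1.contDiff)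

noncomputable def iterPD (a b : ℕ) (f : ℝ × ℝ → ℂ) : ℝ × ℝ → ℂ := (pd 0)^[a] ((pd 1)^[b] f)

lemma pd_congrOn {U : Set (ℝ×ℝ)} (hU : IsOpen U) {f g : ℝ×ℝ→ℂ} (h : ∀ y ∈ U, f y = g y)
    (i : Fin 2) {x} (hx : x ∈ U) : pd i f x = pd i g x := by
  unfold pd
  rw [Filter.EventuallyEq.fderiv_eq (Filter.eventually_of_mem (hU.mem_nhds hx) h)]

lemma pdIter_congrOn {U : Set (ℝ×ℝ)} (hU : IsOpen U) (i : Fin 2) :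
    ∀ (n : ℕ) {f g : ℝ×ℝ→ℂ}, (∀ y ∈ U, f y = g y) → ∀ x ∈ U, (pd i)^[n] f x = (pd i)^[n] g x := by
  intro n
  induction n with
  | zero => intro f g h x hx; simpa using h x hx
  | succ n ih =>
    intro f g h x hx
    rw [Function.iterate_succ_apply, Function.iterate_succ_apply]
    exact ih (fun y hy => pd_congrOn hU h i hy) x hx

lemma iterPD_congrOn {U : Set (ℝ×ℝ)} (hU : IsOpen U) (a b : ℕ) {f g : ℝ×ℝ→ℂ}
    (h : ∀ y ∈ U, f y = g y) : ∀ x ∈ U, iterPD a b f x = iterPD a b g x := by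
  intro x hx
  exact pdIter_congrOn hU 0 a (fun y hy => pdIter_congrOn hU 1 b h y hy) x hx

lemma contDiffOn_pd {U : Set (ℝ×ℝ)} (hU : IsOpen U) {n : ℕ} {f : ℝ×ℝ→ℂ}
    (hf : ContDiffOn ℝ (n+1 : ℕ) f U) (i : Fin 2) :
    ContDiffOn ℝ (n : ℕ) (pd i f) U := by
  have h1 : ContDiffOn ℝ (n : ℕ) (fderiv ℝ f) U :=
    hf.fderiv_of_isOpen hU (by exact_mod_cast le_rfl)
  exact h1.clm_apply contDiffOn_const

lemma diffAt_of_contDiffOn {U : Set (ℝ×ℝ)} (hU : IsOpen U) {n : ℕ} {f : ℝ×ℝ→ℂ}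
    (hf : ContDiffOn ℝ (n+1:ℕ) f U) {x} (hx : x ∈ U) : DifferentiableAt ℝ f x := by
  have h1 : DifferentiableOn ℝ f U := hf.differentiableOn (by simp)
  exact h1.differentiableAt (hU.mem_nhds hx)

lemma pdIter_add {U : Set (ℝ×ℝ)} (hU : IsOpen U) (i : Fin 2) :
    ∀ (n : ℕ) {f g : ℝ×ℝ→ℂ}, ContDiffOn ℝ (n:ℕ) f U → ContDiffOn ℝ (n:ℕ) g U →
      ∀ x ∈ U, (pd i)^[n] (fun y => f y + g y) x = (pd i)^[n] f x + (pd i)^[n] g x := by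
  intro n
  induction n with
  | zero => intros; simp
  | succ n ih =>
    intro f g hf hg x hx
    have h1 : ∀ y ∈ U, pd i (fun z => f z + g z) y = (fun z => pd i f z + pd i g z) y := by
      intro y hy
      simp only [pd]
      rw [fderiv_fun_add (diffAt_of_contDiffOn hU hf hy) (diffAt_of_contDiffOn hU hg hy)]
      simp
    rw [Function.iterate_succ_apply, Function.iterate_succ_apply, Function.iterate_succ_apply]
    rw [pdIter_congrOn hU i n h1 x hx]
    exact ih (contDiffOn_pd hU hf i) (contDiffOn_pd hU hg i) x hx

lemma pdIter_smul {U : Set (ℝ×ℝ)} (hU : IsOpen U) (i : Fin 2) :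
    ∀ (n : ℕ) {f : ℝ×ℝ→ℂ} (s : ℂ), ContDiffOn ℝ (n:ℕ) f U →
      ∀ x ∈ U, (pd i)^[n] (fun y => s * f y) x = s * (pd i)^[n] f x := by
  intro n
  induction n with
  | zero => intros; simp
  | succ n ih =>
    intro f s hf x hx
    have h1 : ∀ y ∈ U, pd i (fun z => s * f z) y = (fun z => s * pd i f z) y := by
      intro y hy
      simp only [pd]
      have := fderiv_fun_const_smul (𝕜 := ℝ) (diffAt_of_contDiffOn hU hf hy) s
      have h2 : (fun z => s * f z) = fun z => s • f z := by funext z; simp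
      rw [h2, this]
      simp
    rw [Function.iterate_succ_apply, Function.iterate_succ_apply]
    rw [pdIter_congrOn hU i n h1 x hx]
    exact ih s (contDiffOn_pd hU hf i) x hx

lemma pd_neg (i : Fin 2) (f : ℝ×ℝ→ℂ) : pd i (fun y => -f y) = fun x => -(pd i f x) := by
  funext x; simp only [pd, fderiv_neg]; simp

lemma pdIter_neg (i : Fin 2) : ∀ (n : ℕ) (f : ℝ×ℝ→ℂ) (x), (pd i)^[n] (fun y => -f y) x = -((pd i)^[n] f x) := by
  intro n; induction n with
  | zero => intros; simp
  | succ n ih =>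
    intro f x
    rw [Function.iterate_succ_apply, Function.iterate_succ_apply, pd_neg]
    exact ih _ x

lemma pd_zero (i : Fin 2) : pd i (fun _ => (0:ℂ)) = fun _ => (0:ℂ) := by
  funext x; simp [pd]

lemma pdIter_zero (i : Fin 2) : ∀ (n : ℕ) (x), (pd i)^[n] (fun _ => (0:ℂ)) x = 0 := by
  intro n; induction n with
  | zero => intros; simp
  | succ n ih => intro x; rw [Function.iterate_succ_apply, pd_zero]; exact ih x

lemma iterPD_zero (a b : ℕ) (x : ℝ×ℝ) : iterPD a b (fun _ => (0:ℂ)) x = 0 := by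
  unfold iterPD
  have h1 : (pd 1)^[b] (fun _ => (0:ℂ)) = fun _ => (0:ℂ) := by
    funext y; exact pdIter_zero 1 b y
  rw [h1]; exact pdIter_zero 0 a x

lemma iterPD_neg (a b : ℕ) (f : ℝ×ℝ→ℂ) (x : ℝ×ℝ) :
    iterPD a b (fun y => -f y) x = -(iterPD a b f x) := by
  unfold iterPD
  have h1 : (pd 1)^[b] (fun y => -f y) = fun y => -((pd 1)^[b] f y) := by
    funext y; exact pdIter_neg 1 b f y
  rw [h1]; exact pdIter_neg 0 a _ x

lemma contDiffOn_pdIter {U : Set (ℝ×ℝ)} (hU : IsOpen U) (i : Fin 2) :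
    ∀ (k : ℕ) {n : ℕ} {f : ℝ×ℝ→ℂ}, ContDiffOn ℝ (k + n : ℕ) f U →
      ContDiffOn ℝ (n:ℕ) ((pd i)^[k] f) U := by
  intro k
  induction k with
  | zero => intro n f hf; simpa using hf
  | succ k ih =>
    intro n f hf
    rw [Function.iterate_succ_apply]
    have : (k + 1 + n : ℕ) = (k + n) + 1 := by omega
    rw [this] at hf
    exact ih (contDiffOn_pd hU hf i)

lemma iterPD_add {U : Set (ℝ×ℝ)} (hU : IsOpen U) (a b : ℕ) {f g : ℝ×ℝ→ℂ}
    (hf : ContDiffOn ℝ (a+b:ℕ) f U) (hg : ContDiffOn ℝ (a+b:ℕ) g U) :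
    ∀ x ∈ U, iterPD a b (fun y => f y + g y) x = iterPD a b f x + iterPD a b g x := by
  intro x hx
  unfold iterPD
  have hfb : ContDiffOn ℝ (b:ℕ) f U := hf.of_le (by exact_mod_cast Nat.le_add_left b a)
  have hgb : ContDiffOn ℝ (b:ℕ) g U := hg.of_le (by exact_mod_cast Nat.le_add_left b a)
  have h1 : ∀ y ∈ U, (pd 1)^[b] (fun z => f z + g z) y
      = (fun z => (pd 1)^[b] f z + (pd 1)^[b] g z) y :=
    fun y hy => pdIter_add hU 1 b hfb hgb y hy
  rw [pdIter_congrOn hU 0 a h1 x hx]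
  have hf' : ContDiffOn ℝ (b + a : ℕ) f U := by rwa [Nat.add_comm b a]
  have hg' : ContDiffOn ℝ (b + a : ℕ) g U := by rwa [Nat.add_comm b a]
  exact pdIter_add hU 0 a (contDiffOn_pdIter hU 1 b hf') (contDiffOn_pdIter hU 1 b hg') x hx

lemma iterPD_smul {U : Set (ℝ×ℝ)} (hU : IsOpen U) (a b : ℕ) {f : ℝ×ℝ→ℂ} (s : ℂ)
    (hf : ContDiffOn ℝ (a+b:ℕ) f U) :
    ∀ x ∈ U, iterPD a b (fun y => s * f y) x = s * iterPD a b f x := by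
  intro x hx
  unfold iterPD
  have hfb : ContDiffOn ℝ (b:ℕ) f U := hf.of_le (by exact_mod_cast Nat.le_add_left b a)
  have h1 : ∀ y ∈ U, (pd 1)^[b] (fun z => s * f z) y = (fun z => s * (pd 1)^[b] f z) y :=
    fun y hy => pdIter_smul hU 1 b s hfb y hy
  rw [pdIter_congrOn hU 0 a h1 x hx]
  have hf' : ContDiffOn ℝ (b + a : ℕ) f U := by rwa [Nat.add_comm b a]
  exact pdIter_smul hU 0 a s (contDiffOn_pdIter hU 1 b hf') x hx

-- ===== formal polynomial layer =====

lemma pderiv_comm (i j : Fin 2) (p : MP) :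
    pderiv i (pderiv j p) = pderiv j (pderiv i p) := by
  induction p using MvPolynomial.induction_on' with
  | monomial s a =>
    rcases eq_or_ne i j with rfl | hij
    · rfl
    · simp only [pderiv_monomial]
      have h1 : ∀ k l : Fin 2, k ≠ l → ((s - Finsupp.single k 1 : Fin 2 →₀ ℕ) l) = s l := by
        intro k l hkl
        rw [Finsupp.tsub_apply, Finsupp.single_apply, if_neg hkl]
        simp
      rw [h1 j i (by exact fun h => hij (h.symm ▸ rfl)), h1 i j hij]
      have h2 : s - Finsupp.single j 1 - Finsupp.single i 1
          = s - Finsupp.single i 1 - Finsupp.single j 1 := by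
        ext k; simp [Finsupp.single_apply]; omega
      rw [h2, mul_assoc, mul_assoc, mul_comm ((s j : ℂ)) _]
  | add p q hp hq => simp [map_add, hp, hq]

lemma pdF1_iter_pderiv0 (b : ℕ) (p : MP) :
    (pderiv (1:Fin 2))^[b] (pderiv 0 p) = pderiv 0 ((pderiv (1:Fin 2))^[b] p) := by
  induction b generalizing p with
  | zero => simp
  | succ b ih =>
    rw [Function.iterate_succ_apply, Function.iterate_succ_apply]
    rw [pderiv_comm 1 0 p, ih]

noncomputable def Wv (x₀ : ℝ × ℝ) : Fin 2 → ℂ := ![(x₀.1 : ℂ), (x₀.2 : ℂ)]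

noncomputable def tval (x₀ : ℝ × ℝ) (i j : ℕ) (p : MP) : ℂ :=
  MvPolynomial.eval (Wv x₀) ((pderiv (0:Fin 2))^[i] ((pderiv (1:Fin 2))^[j] p))

lemma pdF_iter_add (i : Fin 2) (n : ℕ) (p q : MP) :
    (pderiv i)^[n] (p + q) = (pderiv i)^[n] p + (pderiv i)^[n] q := by
  induction n generalizing p q with
  | zero => simp
  | succ n ih => rw [Function.iterate_succ_apply, Function.iterate_succ_apply,
      Function.iterate_succ_apply, map_add, ih]

lemma pdF_iter_smul (i : Fin 2) (n : ℕ) (s : ℂ) (p : MP) :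
    (pderiv i)^[n] (s • p) = s • (pderiv i)^[n] p := by
  induction n generalizing p with
  | zero => simp
  | succ n ih => rw [Function.iterate_succ_apply, Function.iterate_succ_apply,
      Derivation.map_smul, ih]

lemma pdF_iter_zero (i : Fin 2) (n : ℕ) : (pderiv i)^[n] (0 : MP) = 0 := by
  induction n with
  | zero => simp
  | succ n ih => rw [Function.iterate_succ_apply, map_zero, ih]

lemma tval_add (x₀ : ℝ × ℝ) (i j : ℕ) (p q : MP) :
    tval x₀ i j (p + q) = tval x₀ i j p + tval x₀ i j q := by
  unfold tval
  rw [pdF_iter_add, pdF_iter_add, map_add]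

lemma tval_smul (x₀ : ℝ × ℝ) (i j : ℕ) (s : ℂ) (p : MP) :
    tval x₀ i j (s • p) = s * tval x₀ i j p := by
  unfold tval
  rw [pdF_iter_smul, pdF_iter_smul, smul_eq_C_mul, map_mul, eval_C]

lemma tval_zero (x₀ : ℝ × ℝ) (i j : ℕ) : tval x₀ i j (0 : MP) = 0 := by
  unfold tval
  rw [pdF_iter_zero, pdF_iter_zero, map_zero]

lemma tval_sub (x₀ : ℝ × ℝ) (i j : ℕ) (p q : MP) :
    tval x₀ i j (p - q) = tval x₀ i j p - tval x₀ i j q := by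
  have h : p - q = p + (-1 : ℂ) • q := by rw [neg_one_smul, ← sub_eq_add_neg]
  rw [h, tval_add, tval_smul]; ring

lemma tval_sum (x₀ : ℝ × ℝ) (i j : ℕ) {α : Type*} [DecidableEq α] (s : Finset α) (f : α → MP) :
    tval x₀ i j (∑ q ∈ s, f q) = ∑ q ∈ s, tval x₀ i j (f q) := by
  induction s using Finset.induction_on with
  | empty => simp [tval_zero]
  | @insert a s' ha ih => rw [Finset.sum_insert ha, Finset.sum_insert ha, tval_add, ih]

lemma tval_pderiv0 (x₀ : ℝ × ℝ) (i j : ℕ) (p : MP) :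
    tval x₀ i j (pderiv 0 p) = tval x₀ (i+1) j p := by
  unfold tval
  rw [pdF1_iter_pderiv0, ← Function.iterate_succ_apply (pderiv (0:Fin 2))]

lemma tval_pderiv1 (x₀ : ℝ × ℝ) (i j : ℕ) (p : MP) :
    tval x₀ i j (pderiv 1 p) = tval x₀ i (j+1) p := by
  unfold tval
  rw [← Function.iterate_succ_apply (pderiv (1:Fin 2))]

lemma tval_Delta (x₀ : ℝ × ℝ) (a b : ℕ) (p : MP) :
    tval x₀ a b (pderiv 0 (pderiv 0 p) + pderiv 1 (pderiv 1 p))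
      = tval x₀ (a+2) b p + tval x₀ a (b+2) p := by
  rw [tval_add, tval_pderiv0, tval_pderiv0, tval_pderiv1, tval_pderiv1]

-- bridge to analysis
lemma pdIter1_pev (b : ℕ) (p : MP) : (pd 1)^[b] (pev p) = pev ((pderiv (1:Fin 2))^[b] p) := by
  induction b generalizing p with
  | zero => simp
  | succ b ih =>
    rw [Function.iterate_succ_apply, Function.iterate_succ_apply, pd_pev, ih]

lemma pdIter0_pev (a : ℕ) (p : MP) : (pd 0)^[a] (pev p) = pev ((pderiv (0:Fin 2))^[a] p) := by
  induction a generalizing p with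
  | zero => simp
  | succ a ih =>
    rw [Function.iterate_succ_apply, Function.iterate_succ_apply, pd_pev, ih]

lemma iterPD_pev (x₀ : ℝ × ℝ) (a b : ℕ) (p : MP) :
    iterPD a b (pev p) x₀ = tval x₀ a b p := by
  unfold iterPD
  rw [pdIter1_pev, pdIter0_pev]
  rfl

-- centered monomials
noncomputable def Em (x₀ : ℝ × ℝ) (m n : ℕ) : MP :=
  (X 0 - MvPolynomial.C (x₀.1:ℂ))^m * (X 1 - MvPolynomial.C (x₀.2:ℂ))^n

lemma pderiv0_Em (x₀ : ℝ × ℝ) (m n : ℕ) :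
    pderiv 0 (Em x₀ m n) = (m:ℂ) • Em x₀ (m-1) n := by
  unfold Em
  rw [pderiv_mul, pderiv_pow, pderiv_pow]
  rw [map_sub, map_sub, pderiv_X_self, pderiv_C, pderiv_X_of_ne (by decide), pderiv_C]
  rw [smul_eq_C_mul, map_natCast]
  ring

lemma pderiv1_Em (x₀ : ℝ × ℝ) (m n : ℕ) :
    pderiv 1 (Em x₀ m n) = (n:ℂ) • Em x₀ m (n-1) := by
  unfold Em
  rw [pderiv_mul, pderiv_pow, pderiv_pow]
  rw [map_sub, map_sub, pderiv_X_self, pderiv_C, pderiv_X_of_ne (by decide), pderiv_C]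
  rw [smul_eq_C_mul, map_natCast]
  ring

lemma eval_Em (x₀ : ℝ × ℝ) (m n : ℕ) :
    MvPolynomial.eval (Wv x₀) (Em x₀ m n) = if m = 0 ∧ n = 0 then 1 else 0 := by
  unfold Em Wv
  rw [map_mul, map_pow, map_pow, map_sub, map_sub, eval_X, eval_X, eval_C, eval_C]
  simp only [Matrix.cons_val_zero, Matrix.cons_val_one, Matrix.head_cons, sub_self]
  rcases Nat.eq_zero_or_pos m with rfl | hm
  · rcases Nat.eq_zero_or_pos n with rfl | hn
    · simp
    · simp [zero_pow (Nat.pos_iff_ne_zero.mp hn), Nat.pos_iff_ne_zero.mp hn]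
  · simp [zero_pow (Nat.pos_iff_ne_zero.mp hm), Nat.pos_iff_ne_zero.mp hm]

lemma pdF1_iter_Em (x₀ : ℝ × ℝ) (m n : ℕ) (j : ℕ) :
    (pderiv (1:Fin 2))^[j] (Em x₀ m n) = ((n.descFactorial j : ℕ) : ℂ) • Em x₀ m (n - j) := by
  induction j with
  | zero => simp
  | succ j ih =>
    rw [Function.iterate_succ_apply', ih, Derivation.map_smul, pderiv1_Em, smul_smul]
    have h3 : n - j - 1 = n - (j+1) := by omega
    rw [h3, Nat.descFactorial_succ]
    congr 1
    push_cast; ring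

lemma pdF0_iter_Em (x₀ : ℝ × ℝ) (m n : ℕ) (i : ℕ) :
    (pderiv (0:Fin 2))^[i] (Em x₀ m n) = ((m.descFactorial i : ℕ) : ℂ) • Em x₀ (m - i) n := by
  induction i with
  | zero => simp
  | succ i ih =>
    rw [Function.iterate_succ_apply', ih, Derivation.map_smul, pderiv0_Em, smul_smul]
    have h3 : m - i - 1 = m - (i+1) := by omega
    rw [h3, Nat.descFactorial_succ]
    congr 1
    push_cast; ring

lemma tval_Em (x₀ : ℝ × ℝ) (i j m n : ℕ) :
    tval x₀ i j (Em x₀ m n)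
      = if i = m ∧ j = n then ((m.factorial * n.factorial : ℕ) : ℂ) else 0 := by
  unfold tval
  rw [pdF1_iter_Em, pdF_iter_smul, pdF0_iter_Em, smul_smul, smul_eq_C_mul, map_mul, eval_C,
    eval_Em]
  rcases Nat.lt_trichotomy i m with him | him | him
  · have h1 : ¬ (m - i = 0) := by omega
    have h2 : ¬ (i = m) := by omega
    simp [h1, h2]
  · subst him
    rcases Nat.lt_trichotomy j n with hjn | hjn | hjn
    · have h1 : ¬ (n - j = 0) := by omega
      have h2 : ¬ (j = n) := by omega
      simp [h1, h2]
    · subst hjn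
      simp [Nat.descFactorial_self, Nat.sub_self]
      push_cast; ring
    · have h1 : n.descFactorial j = 0 := by
        rw [Nat.descFactorial_eq_zero_iff_lt]; omega
      have h2 : ¬ (j = n) := by omega
      simp [h1, h2]
  · have h1 : m.descFactorial i = 0 := by
      rw [Nat.descFactorial_eq_zero_iff_lt]; omega
    have h2 : ¬ (i = m) := by omega
    simp [h1, h2]

lemma totalDegree_Em (x₀ : ℝ × ℝ) (m n : ℕ) : (Em x₀ m n).totalDegree ≤ m + n := by
  unfold Em
  refine (MvPolynomial.totalDegree_mul _ _).trans ?_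
  have h0 : (X (0:Fin 2) - MvPolynomial.C (x₀.1:ℂ)).totalDegree ≤ 1 := by
    refine (MvPolynomial.totalDegree_sub _ _).trans ?_
    simp [MvPolynomial.totalDegree_X, MvPolynomial.totalDegree_C]
  have h1 : (X (1:Fin 2) - MvPolynomial.C (x₀.2:ℂ)).totalDegree ≤ 1 := by
    refine (MvPolynomial.totalDegree_sub _ _).trans ?_
    simp [MvPolynomial.totalDegree_X, MvPolynomial.totalDegree_C]
  have h2 := (MvPolynomial.totalDegree_pow _ m).trans (Nat.mul_le_mul_left m h0)
  have h3 := (MvPolynomial.totalDegree_pow _ n).trans (Nat.mul_le_mul_left n h1)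
  omega

noncomputable def Idx (d : ℕ) : Finset (ℕ × ℕ) :=
  (Finset.range (d+1) ×ˢ Finset.range (d+1)).filter (fun q => q.1 + q.2 ≤ d)

lemma mem_Idx {d : ℕ} {q : ℕ × ℕ} : q ∈ Idx d ↔ q.1 + q.2 ≤ d := by
  unfold Idx
  simp only [Finset.mem_filter, Finset.mem_product, Finset.mem_range]
  omega

noncomputable def Pc (x₀ : ℝ × ℝ) (d : ℕ) (co : ℕ → ℕ → ℂ) : MP :=
  ∑ q ∈ Idx d, co q.1 q.2 • Em x₀ q.1 q.2

lemma totalDegree_Pc (x₀ : ℝ × ℝ) (d : ℕ) (co : ℕ → ℕ → ℂ) :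
    (Pc x₀ d co).totalDegree ≤ d := by
  unfold Pc
  refine (MvPolynomial.totalDegree_finset_sum _ _).trans ?_
  refine Finset.sup_le ?_
  intro q hq
  refine (MvPolynomial.totalDegree_smul_le _ _).trans ?_
  exact (totalDegree_Em x₀ q.1 q.2).trans (mem_Idx.mp hq)

lemma tval_Pc_le (x₀ : ℝ × ℝ) {d : ℕ} {i j : ℕ} (h : i + j ≤ d) (co : ℕ → ℕ → ℂ) :
    tval x₀ i j (Pc x₀ d co) = ((i.factorial * j.factorial : ℕ) : ℂ) * co i j := by
  unfold Pc
  rw [tval_sum]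
  rw [Finset.sum_eq_single (i, j)]
  · rw [tval_smul, tval_Em]
    simp [mul_comm]
  · intro q hq hne
    rw [tval_smul, tval_Em]
    have : ¬ (i = q.1 ∧ j = q.2) := by
      rintro ⟨h1, h2⟩; exact hne (Prod.ext_iff.mpr ⟨h1.symm, h2.symm⟩)
    simp [this]
  · intro hni
    exact absurd (mem_Idx.mpr (by simpa using h)) hni

lemma tval_Pc_gt (x₀ : ℝ × ℝ) {d : ℕ} {i j : ℕ} (h : d < i + j) (co : ℕ → ℕ → ℂ) :
    tval x₀ i j (Pc x₀ d co) = 0 := by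
  unfold Pc
  rw [tval_sum]
  refine Finset.sum_eq_zero ?_
  intro q hq
  rw [tval_smul, tval_Em]
  have : ¬ (i = q.1 ∧ j = q.2) := by
    rintro ⟨h1, h2⟩
    have := mem_Idx.mp hq
    omega
  simp [this]

-- ===== representation by centered monomials =====

noncomputable def fd (m n : ℕ) : Fin 2 →₀ ℕ := Finsupp.single 0 m + Finsupp.single 1 n

lemma fd_apply0 (m n : ℕ) : fd m n 0 = m := by simp [fd, Finsupp.single_apply]
lemma fd_apply1 (m n : ℕ) : fd m n 1 = n := by simp [fd, Finsupp.single_apply]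

lemma eq_fd (v : Fin 2 →₀ ℕ) : v = fd (v 0) (v 1) := by
  ext i
  fin_cases i
  · show v 0 = fd (v 0) (v 1) 0
    exact (fd_apply0 _ _).symm
  · show v 1 = fd (v 0) (v 1) 1
    exact (fd_apply1 _ _).symm

lemma monomial_fd (m n : ℕ) (c : ℂ) :
    (MvPolynomial.monomial (fd m n) c : MP) = c • (X 0 ^ m * X 1 ^ n) := by
  rw [X_pow_eq_monomial, X_pow_eq_monomial, monomial_mul, one_mul,
    MvPolynomial.smul_monomial, smul_eq_mul, mul_one]
  rfl

lemma finsupp_deg (v : Fin 2 →₀ ℕ) : (v.sum fun _ e => e) = v 0 + v 1 := by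
  rw [Finsupp.sum_fintype _ _ (fun _ => rfl), Fin.sum_univ_two]

lemma rep_monomials {d : ℕ} {q : MP} (h : q.totalDegree ≤ d) :
    q = ∑ mn ∈ Idx d, MvPolynomial.coeff (fd mn.1 mn.2) q • (X 0 ^ mn.1 * X 1 ^ mn.2 : MP) := by
  have e1 : ∀ mn : ℕ × ℕ, (MvPolynomial.coeff (fd mn.1 mn.2) q) • (X 0 ^ mn.1 * X 1 ^ mn.2 : MP)
      = MvPolynomial.monomial (fd mn.1 mn.2) (MvPolynomial.coeff (fd mn.1 mn.2) q) := by
    intro mn; rw [monomial_fd]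
  rw [Finset.sum_congr rfl (fun mn _ => e1 mn)]
  have hinj : ∀ a ∈ Idx d, ∀ b ∈ Idx d,
      (fun mn : ℕ×ℕ => fd mn.1 mn.2) a = (fun mn : ℕ×ℕ => fd mn.1 mn.2) b → a = b := by
    intro a _ b _ hab
    simp only at hab
    have h0 : fd a.1 a.2 0 = fd b.1 b.2 0 := by rw [hab]
    have h1 : fd a.1 a.2 1 = fd b.1 b.2 1 := by rw [hab]
    rw [fd_apply0, fd_apply0] at h0
    rw [fd_apply1, fd_apply1] at h1
    exact Prod.ext_iff.mpr ⟨h0, h1⟩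
  have himg := Finset.sum_image (s := Idx d) (g := fun mn : ℕ×ℕ => fd mn.1 mn.2)
    (f := fun v : Fin 2 →₀ ℕ => MvPolynomial.monomial v (MvPolynomial.coeff v q)) hinj
  rw [← himg]
  have hsub : q.support ⊆ (Idx d).image (fun mn : ℕ×ℕ => fd mn.1 mn.2) := by
    intro v hv
    rw [Finset.mem_image]
    refine ⟨(v 0, v 1), ?_, (eq_fd v).symm⟩
    rw [mem_Idx]
    have := MvPolynomial.le_totalDegree hv
    rw [finsupp_deg] at this
    exact this.trans h
  conv_lhs => rw [q.as_sum]
  refine Finset.sum_subset hsub ?_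
  intro v _ hnv
  rw [MvPolynomial.notMem_support_iff.mp hnv, map_zero]

noncomputable def shA (x₀ : ℝ × ℝ) : MP →ₐ[ℂ] MP :=
  MvPolynomial.aeval ![X 0 + MvPolynomial.C (x₀.1:ℂ), X 1 + MvPolynomial.C (x₀.2:ℂ)]

noncomputable def bkA (x₀ : ℝ × ℝ) : MP →ₐ[ℂ] MP :=
  MvPolynomial.aeval ![X 0 - MvPolynomial.C (x₀.1:ℂ), X 1 - MvPolynomial.C (x₀.2:ℂ)]

lemma bkA_X0 (x₀ : ℝ × ℝ) : bkA x₀ (X 0) = X 0 - MvPolynomial.C (x₀.1:ℂ) := by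
  unfold bkA; rw [aeval_X]; rfl

lemma bkA_X1 (x₀ : ℝ × ℝ) : bkA x₀ (X 1) = X 1 - MvPolynomial.C (x₀.2:ℂ) := by
  unfold bkA; rw [aeval_X]; rfl

lemma bk_sh (x₀ : ℝ × ℝ) (p : MP) : bkA x₀ (shA x₀ p) = p := by
  have h := MvPolynomial.comp_aeval
    ![X 0 + MvPolynomial.C (x₀.1:ℂ), X 1 + MvPolynomial.C (x₀.2:ℂ)] (bkA x₀)
  have h2 : (fun i : Fin 2 => bkA x₀
      (![X 0 + MvPolynomial.C (x₀.1:ℂ), X 1 + MvPolynomial.C (x₀.2:ℂ)] i)) = X := by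
    funext i
    fin_cases i
    · show bkA x₀ (X 0 + MvPolynomial.C (x₀.1:ℂ)) = X 0
      rw [map_add, bkA_X0]
      have : bkA x₀ (MvPolynomial.C (x₀.1:ℂ)) = MvPolynomial.C (x₀.1:ℂ) := by
        unfold bkA; rw [aeval_C]; rfl
      rw [this]; ring
    · show bkA x₀ (X 1 + MvPolynomial.C (x₀.2:ℂ)) = X 1
      rw [map_add, bkA_X1]
      have : bkA x₀ (MvPolynomial.C (x₀.2:ℂ)) = MvPolynomial.C (x₀.2:ℂ) := by
        unfold bkA; rw [aeval_C]; rfl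
      rw [this]; ring
  rw [h2] at h
  have h3 : (bkA x₀).comp (shA x₀) = AlgHom.id ℂ MP := by
    unfold shA; rw [h, aeval_X_left]
  calc bkA x₀ (shA x₀ p) = ((bkA x₀).comp (shA x₀)) p := rfl
    _ = p := by rw [h3]; rfl

lemma deg_shA (x₀ : ℝ × ℝ) (p : MP) : (shA x₀ p).totalDegree ≤ p.totalDegree := by
  conv_lhs => rw [p.as_sum, map_sum]
  refine (MvPolynomial.totalDegree_finset_sum _ _).trans (Finset.sup_le ?_)
  intro v hv
  have hv2 : (MvPolynomial.monomial v) (MvPolynomial.coeff v p)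
      = MvPolynomial.coeff v p • (X 0 ^ (v 0) * X 1 ^ (v 1) : MP) := by
    conv_rhs => rw [← monomial_fd]
    rw [← eq_fd]
  rw [hv2, map_smul, map_mul, map_pow, map_pow]
  refine (MvPolynomial.totalDegree_smul_le _ _).trans ?_
  refine (MvPolynomial.totalDegree_mul _ _).trans ?_
  have hX0 : (shA x₀ (X 0)).totalDegree ≤ 1 := by
    have he : shA x₀ (X 0) = X 0 + MvPolynomial.C (x₀.1:ℂ) := by
      unfold shA; rw [aeval_X]; rfl
    rw [he]
    refine (MvPolynomial.totalDegree_add _ _).trans ?_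
    simp [MvPolynomial.totalDegree_X, MvPolynomial.totalDegree_C]
  have hX1 : (shA x₀ (X 1)).totalDegree ≤ 1 := by
    have he : shA x₀ (X 1) = X 1 + MvPolynomial.C (x₀.2:ℂ) := by
      unfold shA; rw [aeval_X]; rfl
    rw [he]
    refine (MvPolynomial.totalDegree_add _ _).trans ?_
    simp [MvPolynomial.totalDegree_X, MvPolynomial.totalDegree_C]
  have h2 := (MvPolynomial.totalDegree_pow _ (v 0)).trans (Nat.mul_le_mul_left (v 0) hX0)
  have h3 := (MvPolynomial.totalDegree_pow _ (v 1)).trans (Nat.mul_le_mul_left (v 1) hX1)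
  have h4 := MvPolynomial.le_totalDegree hv
  rw [finsupp_deg] at h4
  omega

lemma rep (x₀ : ℝ × ℝ) {d : ℕ} {p : MP} (h : p.totalDegree ≤ d) :
    ∃ co : ℕ → ℕ → ℂ, p = Pc x₀ d co := by
  refine ⟨fun m n => MvPolynomial.coeff (fd m n) (shA x₀ p), ?_⟩
  have hdeg : (shA x₀ p).totalDegree ≤ d := (deg_shA x₀ p).trans h
  have h1 := rep_monomials hdeg
  have h2 := congrArg (bkA x₀) h1
  rw [bk_sh, map_sum] at h2
  conv_lhs => rw [h2]
  unfold Pc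
  refine Finset.sum_congr rfl ?_
  intro mn _
  rw [map_smul, map_mul, map_pow, map_pow, bkA_X0, bkA_X1]
  rfl

-- ===== key vanishing & decomposition =====

lemma pev_add (p q : MP) (x : ℝ × ℝ) : pev (p + q) x = pev p x + pev q x := by simp [pev]
lemma pev_smul (s : ℂ) (p : MP) (x : ℝ × ℝ) : pev (s • p) x = s * pev p x := by
  simp [pev, smul_eq_C_mul]
lemma pev_zero (x : ℝ × ℝ) : pev (0 : MP) x = 0 := by simp [pev]

lemma pev_x0 (p : MP) (x₀ : ℝ × ℝ) : pev p x₀ = tval x₀ 0 0 p := by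
  unfold tval Wv pev
  simp

lemma contDiffOn_pev {U : Set (ℝ×ℝ)} (n : ℕ) (p : MP) : ContDiffOn ℝ (n:ℕ) (pev p) U :=
  (pev_contDiff _ p).contDiffOn

def van (x₀ : ℝ×ℝ) (k : ℕ) (p : MP) : Prop := ∀ i j, i + j ≤ k → tval x₀ i j p = 0

lemma van_mono {x₀ : ℝ×ℝ} {k l : ℕ} {p : MP} (h : van x₀ k p) (hlk : l ≤ k) : van x₀ l p :=
  fun i j hij => h i j (hij.trans hlk)

lemma van_pderiv0 {x₀ : ℝ×ℝ} {k : ℕ} {p : MP} (h : van x₀ (k+1) p) : van x₀ k (pderiv 0 p) :=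
  fun i j hij => by rw [tval_pderiv0]; exact h (i+1) j (by omega)

lemma van_pderiv1 {x₀ : ℝ×ℝ} {k : ℕ} {p : MP} (h : van x₀ (k+1) p) : van x₀ k (pderiv 1 p) :=
  fun i j hij => by rw [tval_pderiv1]; exact h i (j+1) (by omega)

lemma key {U : Set (ℝ×ℝ)} (hU : IsOpen U) {x₀ : ℝ×ℝ} (hx : x₀ ∈ U) :
    ∀ (b a : ℕ) {h : ℝ×ℝ→ℂ} {p : MP}, ContDiffOn ℝ (a+b:ℕ) h U → van x₀ (a+b) p →
      iterPD a b (fun x => h x * pev p x) x₀ = 0 := by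
  intro b
  induction b with
  | zero =>
    intro a
    induction a with
    | zero =>
      intro h p hh hp
      show (fun x => h x * pev p x) x₀ = 0
      have h0 : pev p x₀ = 0 := by rw [pev_x0]; exact hp 0 0 (le_refl 0)
      simp only [h0, mul_zero]
    | succ a iha =>
      intro h p hh hp
      simp only [Nat.add_zero] at hh hp
      have hstep : ∀ y ∈ U, pd 0 (fun x => h x * pev p x) y
          = (fun x => pd 0 h x * pev p x + h x * pev (pderiv 0 p) x) y := by
        intro y hy
        have hdh : DifferentiableAt ℝ h y := diffAt_of_contDiffOn hU (n := a) hh hy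
        have hpdpev := congrFun (pd_pev 0 p) y
        simp only [pd] at hpdpev ⊢
        rw [fderiv_fun_mul hdh (pev_differentiable p y)]
        simp only [ContinuousLinearMap.add_apply, ContinuousLinearMap.smul_apply, smul_eq_mul]
        rw [hpdpev]
        ring
      show (pd 0)^[a+1] ((pd 1)^[0] fun x => h x * pev p x) x₀ = 0
      rw [Function.iterate_zero_apply, Function.iterate_succ_apply]
      rw [pdIter_congrOn hU 0 a hstep x₀ hx]
      have hc1 : ContDiffOn ℝ (a:ℕ) (fun x => pd 0 h x * pev p x) U :=
        (contDiffOn_pd hU hh 0).mul (contDiffOn_pev a p)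
      have hc2 : ContDiffOn ℝ (a:ℕ) (fun x => h x * pev (pderiv 0 p) x) U :=
        (hh.of_le (by exact_mod_cast Nat.le_succ a)).mul (contDiffOn_pev a _)
      rw [pdIter_add hU 0 a hc1 hc2 x₀ hx]
      have e1 : (pd 0)^[a] (fun x => pd 0 h x * pev p x) x₀ = 0 := by
        have := iha (h := pd 0 h) (p := p)
          (by simpa using contDiffOn_pd hU hh 0) (van_mono hp (Nat.le_succ a))
        simpa [iterPD] using this
      have e2 : (pd 0)^[a] (fun x => h x * pev (pderiv 0 p) x) x₀ = 0 := by
        have := iha (h := h) (p := pderiv 0 p)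
          (by simpa using hh.of_le (by exact_mod_cast Nat.le_succ a)) (van_pderiv0 hp)
        simpa [iterPD] using this
      rw [e1, e2, add_zero]
  | succ b ihb =>
    intro a h p hh hp
    have harith : (a + (b+1) : ℕ) = (a+b) + 1 := by omega
    rw [harith] at hh hp
    have hstep : ∀ y ∈ U, pd 1 (fun x => h x * pev p x) y
        = (fun x => pd 1 h x * pev p x + h x * pev (pderiv 1 p) x) y := by
      intro y hy
      have hdh : DifferentiableAt ℝ h y := diffAt_of_contDiffOn hU (n := a+b) hh hy
      have hpdpev := congrFun (pd_pev 1 p) y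
      simp only [pd] at hpdpev ⊢
      rw [fderiv_fun_mul hdh (pev_differentiable p y)]
      simp only [ContinuousLinearMap.add_apply, ContinuousLinearMap.smul_apply, smul_eq_mul]
      rw [hpdpev]
      ring
    show (pd 0)^[a] ((pd 1)^[b+1] fun x => h x * pev p x) x₀ = 0
    rw [Function.iterate_succ_apply]
    have hrepl : ∀ y ∈ U, (pd 1)^[b] (pd 1 fun x => h x * pev p x) y
        = (pd 1)^[b] (fun x => pd 1 h x * pev p x + h x * pev (pderiv 1 p) x) y :=
      fun y hy => pdIter_congrOn hU 1 b hstep y hy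
    have hrepl2 : ∀ x ∈ U, (pd 0)^[a] ((pd 1)^[b] (pd 1 fun x => h x * pev p x)) x
        = (pd 0)^[a] ((pd 1)^[b] (fun x => pd 1 h x * pev p x + h x * pev (pderiv 1 p) x)) x :=
      fun y hy => pdIter_congrOn hU 0 a hrepl y hy
    rw [hrepl2 x₀ hx]
    have hc1 : ContDiffOn ℝ (a+b:ℕ) (fun x => pd 1 h x * pev p x) U :=
      (contDiffOn_pd hU hh 1).mul (contDiffOn_pev _ p)
    have hc2 : ContDiffOn ℝ (a+b:ℕ) (fun x => h x * pev (pderiv 1 p) x) U :=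
      (hh.of_le (by exact_mod_cast Nat.le_succ (a+b))).mul (contDiffOn_pev _ _)
    have hadd := iterPD_add hU a b hc1 hc2 x₀ hx
    simp only [iterPD] at hadd
    rw [hadd]
    have e1 := ihb a (h := pd 1 h) (p := p)
      (contDiffOn_pd hU hh 1) (van_mono hp (Nat.le_succ (a+b)))
    have e2 := ihb a (h := h) (p := pderiv 1 p)
      (hh.of_le (by exact_mod_cast Nat.le_succ (a+b))) (van_pderiv1 hp)
    simp only [iterPD] at e1 e2
    rw [e1, e2, add_zero]

noncomputable def Phi (g : ℝ×ℝ→ℂ) (x₀ : ℝ×ℝ) (a b : ℕ) (p : MP) : ℂ :=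
  iterPD a b (fun x => g x * pev p x) x₀

lemma Phi_vanish {U : Set (ℝ×ℝ)} (hU : IsOpen U) {x₀ : ℝ×ℝ} (hx : x₀ ∈ U) {g : ℝ×ℝ→ℂ}
    {a b : ℕ} (hg : ContDiffOn ℝ (a+b:ℕ) g U) {p : MP} (hp : van x₀ (a+b) p) :
    Phi g x₀ a b p = 0 :=
  key hU hx b a hg hp

lemma Phi_add {U : Set (ℝ×ℝ)} (hU : IsOpen U) {x₀ : ℝ×ℝ} (hx : x₀ ∈ U) {g : ℝ×ℝ→ℂ}
    {a b : ℕ} (hg : ContDiffOn ℝ (a+b:ℕ) g U) (p q : MP) :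
    Phi g x₀ a b (p + q) = Phi g x₀ a b p + Phi g x₀ a b q := by
  unfold Phi
  have h1 : (fun x => g x * pev (p+q) x)
      = fun x => (fun x => g x * pev p x) x + (fun x => g x * pev q x) x := by
    funext x; rw [pev_add]; ring
  rw [h1]
  exact iterPD_add hU a b (hg.mul (contDiffOn_pev _ p)) (hg.mul (contDiffOn_pev _ q)) x₀ hx

lemma Phi_smul {U : Set (ℝ×ℝ)} (hU : IsOpen U) {x₀ : ℝ×ℝ} (hx : x₀ ∈ U) {g : ℝ×ℝ→ℂ}
    {a b : ℕ} (hg : ContDiffOn ℝ (a+b:ℕ) g U) (s : ℂ) (p : MP) :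
    Phi g x₀ a b (s • p) = s * Phi g x₀ a b p := by
  unfold Phi
  have h1 : (fun x => g x * pev (s • p) x)
      = fun x => s * (fun x => g x * pev p x) x := by
    funext x; rw [pev_smul]; ring
  rw [h1]
  exact iterPD_smul hU a b s (hg.mul (contDiffOn_pev _ p)) x₀ hx

lemma Phi_zero (g : ℝ×ℝ→ℂ) (x₀ : ℝ×ℝ) (a b : ℕ) : Phi g x₀ a b 0 = 0 := by
  unfold Phi
  have h1 : (fun x => g x * pev (0:MP) x) = fun _ => (0:ℂ) := by
    funext x; rw [pev_zero]; ring
  rw [h1]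
  exact iterPD_zero a b x₀

lemma Phi_sub {U : Set (ℝ×ℝ)} (hU : IsOpen U) {x₀ : ℝ×ℝ} (hx : x₀ ∈ U) {g : ℝ×ℝ→ℂ}
    {a b : ℕ} (hg : ContDiffOn ℝ (a+b:ℕ) g U) (p q : MP) :
    Phi g x₀ a b (p - q) = Phi g x₀ a b p - Phi g x₀ a b q := by
  have h : p - q = p + (-1 : ℂ) • q := by rw [neg_one_smul, ← sub_eq_add_neg]
  rw [h, Phi_add hU hx hg, Phi_smul hU hx hg]; ring

lemma Phi_sum {U : Set (ℝ×ℝ)} (hU : IsOpen U) {x₀ : ℝ×ℝ} (hx : x₀ ∈ U) {g : ℝ×ℝ→ℂ}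
    {a b : ℕ} (hg : ContDiffOn ℝ (a+b:ℕ) g U) {α : Type*} [DecidableEq α]
    (s : Finset α) (f : α → MP) :
    Phi g x₀ a b (∑ i ∈ s, f i) = ∑ i ∈ s, Phi g x₀ a b (f i) := by
  induction s using Finset.induction_on with
  | empty => simp [Phi_zero]
  | @insert a' s' ha' ih =>
    rw [Finset.sum_insert ha', Finset.sum_insert ha', Phi_add hU hx hg, ih]

lemma DEC {U : Set (ℝ×ℝ)} (hU : IsOpen U) {x₀ : ℝ×ℝ} (hx : x₀ ∈ U) {g : ℝ×ℝ→ℂ}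
    {N : ℕ} (hg : ContDiffOn ℝ (N:ℕ) g U) {a b : ℕ} (hab : a + b ≤ N) (p r : MP) :
    iterPD a b (fun x => (pd 0 (pd 0 (pev p)) x + pd 1 (pd 1 (pev p)) x)
        + g x * pev p x - pev r x) x₀
      = (tval x₀ (a+2) b p + tval x₀ a (b+2) p) + Phi g x₀ a b p - tval x₀ a b r := by
  have hgab : ContDiffOn ℝ (a+b:ℕ) g U := hg.of_le (by exact_mod_cast hab)
  have hfun : (fun x => (pd 0 (pd 0 (pev p)) x + pd 1 (pd 1 (pev p)) x)
        + g x * pev p x - pev r x)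
      = fun x => ((fun y => pev (pderiv 0 (pderiv 0 p) + pderiv 1 (pderiv 1 p)) y
            + g y * pev p y) x + (fun y => - pev r y) x) := by
    funext x
    rw [pd_pev 0 p, pd_pev 0 (pderiv 0 p), pd_pev 1 p, pd_pev 1 (pderiv 1 p)]
    simp only [pev_add]
    ring
  rw [hfun]
  have hc1 : ContDiffOn ℝ (a+b:ℕ)
      (fun y => pev (pderiv 0 (pderiv 0 p) + pderiv 1 (pderiv 1 p)) y + g y * pev p y) U :=
    (contDiffOn_pev _ _).add (hgab.mul (contDiffOn_pev _ p))
  have hc2 : ContDiffOn ℝ (a+b:ℕ) (fun y => - pev r y) U := (contDiffOn_pev (U := U) _ r).neg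
  rw [iterPD_add hU a b hc1 hc2 x₀ hx]
  have hc3 : ContDiffOn ℝ (a+b:ℕ)
      (fun y => pev (pderiv 0 (pderiv 0 p) + pderiv 1 (pderiv 1 p)) y) U := contDiffOn_pev _ _
  have hc4 : ContDiffOn ℝ (a+b:ℕ) (fun y => g y * pev p y) U := hgab.mul (contDiffOn_pev _ p)
  rw [iterPD_add hU a b hc3 hc4 x₀ hx]
  rw [iterPD_neg a b (pev r) x₀]
  have e1 : iterPD a b (fun y => pev (pderiv 0 (pderiv 0 p) + pderiv 1 (pderiv 1 p)) y) x₀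
      = tval x₀ (a+2) b p + tval x₀ a (b+2) p := by
    rw [show (fun y => pev (pderiv 0 (pderiv 0 p) + pderiv 1 (pderiv 1 p)) y)
      = pev (pderiv 0 (pderiv 0 p) + pderiv 1 (pderiv 1 p)) from rfl]
    rw [iterPD_pev, tval_Delta]
  have e2 : iterPD a b (pev r) x₀ = tval x₀ a b r := iterPD_pev x₀ a b r
  rw [e1, e2]
  show _ = _ + Phi g x₀ a b p - _
  unfold Phi
  ring

-- ===== solver =====

noncomputable def solveC (w : ℕ → ℕ → ℂ) : ℕ → ℕ → ℂ
  | m, n =>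
    if h : m < 2 then 0
    else (w (m - 2) n - (((m-2).factorial * (n+2).factorial : ℕ) : ℂ) * solveC w (m - 2) (n + 2))
      / ((m.factorial * n.factorial : ℕ) : ℂ)
  termination_by m _ => m
  decreasing_by omega

lemma fact2_ne (k l : ℕ) : ((k.factorial * l.factorial : ℕ) : ℂ) ≠ 0 :=
  Nat.cast_ne_zero.mpr (Nat.mul_ne_zero (Nat.factorial_ne_zero k) (Nat.factorial_ne_zero l))

lemma solveC_lt (w : ℕ → ℕ → ℂ) {m : ℕ} (n : ℕ) (h : m < 2) : solveC w m n = 0 := by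
  rw [solveC]
  simp [h]

lemma solveC_spec (w : ℕ → ℕ → ℂ) (a b : ℕ) :
    (((a+2).factorial * b.factorial : ℕ) : ℂ) * solveC w (a+2) b
      + ((a.factorial * (b+2).factorial : ℕ) : ℂ) * solveC w a (b+2) = w a b := by
  conv_lhs => rw [solveC]
  rw [dif_neg (by omega)]
  have h2 : a + 2 - 2 = a := by omega
  rw [h2]
  rw [mul_div_cancel₀ _ (fact2_ne (a+2) b)]
  ring

lemma Pc_add (x₀ : ℝ × ℝ) (d : ℕ) (f g : ℕ→ℕ→ℂ) :
    Pc x₀ d (fun m n => f m n + g m n) = Pc x₀ d f + Pc x₀ d g := by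
  unfold Pc
  rw [← Finset.sum_add_distrib]
  exact Finset.sum_congr rfl (fun q _ => add_smul _ _ _)

-- ===== main surjectivity construction =====

lemma MAIN {U : Set (ℝ×ℝ)} (hU : IsOpen U) {x₀ : ℝ×ℝ} (hx : x₀ ∈ U) {g : ℝ×ℝ→ℂ} {d : ℕ}
    (hd : 2 ≤ d) (hg : ContDiffOn ℝ ((d-2:ℕ)) g U) :
    ∀ (M K : ℕ), d - 1 ≤ K + M → ∀ wt : ℕ → ℕ → ℂ,
      (∀ a b, a + b ≤ d - 2 → a + b < K → wt a b = 0) →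
      ∃ p : MP, p.totalDegree ≤ d ∧ van x₀ (K+1) p ∧
        ∀ a b, a + b ≤ d - 2 →
          tval x₀ (a+2) b p + tval x₀ a (b+2) p + Phi g x₀ a b p = wt a b := by
  have hzero : ∀ K : ℕ, d - 1 ≤ K → ∀ wt : ℕ → ℕ → ℂ,
      (∀ a b, a + b ≤ d - 2 → a + b < K → wt a b = 0) →
      ∃ p : MP, p.totalDegree ≤ d ∧ van x₀ (K+1) p ∧
        ∀ a b, a + b ≤ d - 2 →
          tval x₀ (a+2) b p + tval x₀ a (b+2) p + Phi g x₀ a b p = wt a b := by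
    intro K hK wt hwt
    refine ⟨0, by simp, fun i j _ => tval_zero x₀ i j, ?_⟩
    intro a b hab
    rw [tval_zero, tval_zero, Phi_zero, hwt a b hab (by omega)]
    ring
  intro M
  induction M with
  | zero => intro K hK wt hwt; exact hzero K (by omega) wt hwt
  | succ M ih =>
    intro K hK wt hwt
    by_cases hKd : d - 1 ≤ K
    · exact hzero K hKd wt hwt
    · push_neg at hKd
      set coQ : ℕ → ℕ → ℂ := fun m n => if m + n = K + 2 then solveC wt m n else 0 with hcoQ
      set q : MP := Pc x₀ d coQ with hq
      have hdegq : q.totalDegree ≤ d := totalDegree_Pc x₀ d coQ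
      have hvanq : van x₀ (K+1) q := by
        intro i j hij
        rw [hq, tval_Pc_le x₀ (by omega) coQ]
        have hne : ¬ (i + j = K + 2) := by omega
        simp [hcoQ, hne]
      have htq : ∀ a b : ℕ, a + b ≤ d - 2 →
          tval x₀ (a+2) b q + tval x₀ a (b+2) q = if a + b = K then wt a b else 0 := by
        intro a b hab
        rw [hq, tval_Pc_le x₀ (by omega) coQ, tval_Pc_le x₀ (by omega) coQ]
        by_cases hK2 : a + b = K
        · have h1 : (a+2) + b = K + 2 := by omega
          have h2 : a + (b+2) = K + 2 := by omega
          rw [if_pos hK2]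
          simp only [hcoQ, h1, h2, if_pos]
          exact solveC_spec wt a b
        · have h1 : ¬ ((a+2) + b = K + 2) := by omega
          have h2 : ¬ (a + (b+2) = K + 2) := by omega
          rw [if_neg hK2]
          simp only [hcoQ, h1, h2, if_false]
          simp
      have hphiq : ∀ a b : ℕ, a + b ≤ K + 1 → a + b ≤ d - 2 → Phi g x₀ a b q = 0 := by
        intro a b h1 h2
        exact Phi_vanish hU hx (hg.of_le (by exact_mod_cast h2)) (van_mono hvanq h1)
      set wt' : ℕ → ℕ → ℂ := fun a b =>
        wt a b - (tval x₀ (a+2) b q + tval x₀ a (b+2) q + Phi g x₀ a b q) with hwt'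
      have hsupp' : ∀ a b, a + b ≤ d - 2 → a + b < K + 1 → wt' a b = 0 := by
        intro a b hab hlt
        simp only [hwt']
        rw [hphiq a b (by omega) hab]
        rcases Nat.lt_or_ge (a+b) K with hlt2 | hge
        · rw [htq a b hab, if_neg (by omega), hwt a b hab hlt2]; ring
        · have he : a + b = K := by omega
          rw [htq a b hab, if_pos he]; ring
      obtain ⟨p', hdp', hvp', heqp'⟩ := ih (K+1) (by omega) wt' hsupp'
      refine ⟨q + p', ?_, ?_, ?_⟩
      · exact (MvPolynomial.totalDegree_add q p').trans (max_le hdegq hdp')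
      · intro i j hij
        rw [tval_add, hvanq i j hij, (van_mono hvp' (by omega)) i j hij]
        ring
      · intro a b hab
        rw [tval_add, tval_add, Phi_add hU hx (hg.of_le (by exact_mod_cast hab))]
        have h5 := heqp' a b hab
        simp only [hwt'] at h5
        linear_combination h5

-- ===== kernel existence =====

lemma EX {U : Set (ℝ×ℝ)} (hU : IsOpen U) {x₀ : ℝ×ℝ} (hx : x₀ ∈ U) {g : ℝ×ℝ→ℂ} {d : ℕ}
    (hd : 2 ≤ d) (hg : ContDiffOn ℝ ((d-2:ℕ)) g U) (α β : ℕ → ℂ) :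
    ∃ p : MP, p.totalDegree ≤ d ∧
      (∀ a b, a + b ≤ d - 2 →
        tval x₀ (a+2) b p + tval x₀ a (b+2) p + Phi g x₀ a b p = 0) ∧
      (∀ n, n ≤ d → tval x₀ 0 n p = (n.factorial : ℂ) * α n) ∧
      (∀ n, n + 1 ≤ d → tval x₀ 1 n p = (n.factorial : ℂ) * β n) := by
  suffices h : ∀ j, j ≤ d → ∃ co : ℕ → ℕ → ℂ,
      (∀ n, n ≤ j → co 0 n = α n) ∧ (∀ n, n + 1 ≤ j → co 1 n = β n) ∧
      (∀ m n, j < m + n → co m n = 0) ∧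
      (∀ a b, a + b + 2 ≤ j → tval x₀ (a+2) b (Pc x₀ d co) + tval x₀ a (b+2) (Pc x₀ d co)
        + Phi g x₀ a b (Pc x₀ d co) = 0) by
    obtain ⟨co, h0, h1, h2, h3⟩ := h d le_rfl
    refine ⟨Pc x₀ d co, totalDegree_Pc x₀ d co, ?_, ?_, ?_⟩
    · intro a b hab; exact h3 a b (by omega)
    · intro n hn
      rw [tval_Pc_le x₀ (by omega) co, h0 n hn]
      norm_num
    · intro n hn
      rw [tval_Pc_le x₀ (by omega) co, h1 n hn]
      norm_num
  intro j
  induction j with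
  | zero =>
    intro _
    refine ⟨fun m n => if m = 0 ∧ n = 0 then α 0 else 0, ?_, ?_, ?_, ?_⟩
    · intro n hn
      have : n = 0 := by omega
      subst this; simp
    · intro n hn; omega
    · intro m n h
      have : ¬ (m = 0 ∧ n = 0) := by omega
      simp [this]
    · intro a b h; omega
  | succ j ihj =>
    intro hj1
    obtain ⟨co, h0, h1, h2, h3⟩ := ihj (by omega)
    set w : ℕ → ℕ → ℂ := fun a b =>
      - Phi g x₀ a b (Pc x₀ d co)
      - ((a.factorial * (b+2).factorial : ℕ) : ℂ) *
          (if a = 0 then α (b+2) else if a = 1 then β (b+2) else 0) with hw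
    set δ : ℕ → ℕ → ℂ := fun m n => if m + n = j + 1 then
        (if m = 0 then α n else if m = 1 then β n else solveC w m n) else 0 with hδ
    refine ⟨fun m n => co m n + δ m n, ?_, ?_, ?_, ?_⟩
    · intro n hn
      simp only [hδ]
      rcases Nat.lt_or_ge n (j+1) with hlt | hge
      · rw [if_neg (by omega), h0 n (by omega)]; ring
      · have he : n = j + 1 := by omega
        rw [if_pos (by omega)]
        simp [h2 0 n (by omega)]
    · intro n hn
      simp only [hδ]
      rcases Nat.lt_or_ge (n+1) (j+1) with hlt | hge
      · rw [if_neg (by omega), h1 n (by omega)]; ring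
      · have he : 1 + n = j + 1 := by omega
        rw [if_pos he]
        simp [h2 1 n (by omega)]
    · intro m n h
      simp only [hδ]
      rw [if_neg (by omega), h2 m n (by omega)]; ring
    · intro a b hab
      have hPc : Pc x₀ d (fun m n => co m n + δ m n) = Pc x₀ d co + Pc x₀ d δ :=
        Pc_add x₀ d co δ
      have habd : a + b ≤ d - 2 := by omega
      have hvδ : van x₀ (a+b) (Pc x₀ d δ) := by
        intro i k hik
        rcases Nat.lt_or_ge d (i+k) with hgt | hle
        · exact tval_Pc_gt x₀ hgt δ
        · rw [tval_Pc_le x₀ hle δ]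
          simp only [hδ]
          rw [if_neg (by omega)]
          ring
      have hPhiδ : Phi g x₀ a b (Pc x₀ d δ) = 0 :=
        Phi_vanish hU hx (hg.of_le (by exact_mod_cast habd)) hvδ
      rw [hPc, tval_add, tval_add, Phi_add hU hx (hg.of_le (by exact_mod_cast habd)), hPhiδ]
      rcases Nat.lt_or_ge (a+b+2) (j+1) with hold | hnew
      · -- old grade : δ contributes nothing to the tvals either
        have hδ1 : tval x₀ (a+2) b (Pc x₀ d δ) = 0 := by
          rw [tval_Pc_le x₀ (by omega) δ]
          simp only [hδ]; rw [if_neg (by omega)]; ring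
        have hδ2 : tval x₀ a (b+2) (Pc x₀ d δ) = 0 := by
          rw [tval_Pc_le x₀ (by omega) δ]
          simp only [hδ]; rw [if_neg (by omega)]; ring
        rw [hδ1, hδ2]
        have := h3 a b (by omega)
        linear_combination this
      · -- new grade : a + b + 2 = j + 1
        have hnew' : a + b + 2 = j + 1 := by omega
        -- co vanishes at degree j+1
        have hco1 : co (a+2) b = 0 := h2 (a+2) b (by omega)
        have hco2 : co a (b+2) = 0 := h2 a (b+2) (by omega)
        have hδ1 : tval x₀ (a+2) b (Pc x₀ d δ)
            = (((a+2).factorial * b.factorial : ℕ) : ℂ) * solveC w (a+2) b := by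
          rw [tval_Pc_le x₀ (by omega) δ]
          simp only [hδ]
          rw [if_pos (by omega), if_neg (by omega), if_neg (by omega)]
        have hδ2 : tval x₀ a (b+2) (Pc x₀ d δ)
            = ((a.factorial * (b+2).factorial : ℕ) : ℂ) *
              (if a = 0 then α (b+2) else if a = 1 then β (b+2) else solveC w a (b+2)) := by
          rw [tval_Pc_le x₀ (by omega) δ]
          simp only [hδ]
          rw [if_pos (by omega)]
        have ht1 : tval x₀ (a+2) b (Pc x₀ d co) = 0 := by
          rw [tval_Pc_le x₀ (by omega) co, hco1]; ring
        have ht2 : tval x₀ a (b+2) (Pc x₀ d co) = 0 := by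
          rw [tval_Pc_le x₀ (by omega) co, hco2]; ring
        rw [hδ1, hδ2, ht1, ht2]
        have hspec := solveC_spec w a b
        rcases Nat.lt_or_ge a 2 with ha2 | ha2
        · rw [solveC_lt w (b+2) ha2] at hspec
          have hIF : (if a = 0 then α (b+2) else if a = 1 then β (b+2) else solveC w a (b+2))
              = (if a = 0 then α (b+2) else if a = 1 then β (b+2) else 0) := by
            interval_cases a <;> simp
          rw [hIF]
          have hw' : w a b = - Phi g x₀ a b (Pc x₀ d co)
              - ((a.factorial * (b+2).factorial : ℕ) : ℂ) *
                (if a = 0 then α (b+2) else if a = 1 then β (b+2) else 0) := by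
            simp only [hw]
          rw [hw'] at hspec
          linear_combination hspec
        · rw [if_neg (by omega), if_neg (by omega)]
          have hw' : w a b = - Phi g x₀ a b (Pc x₀ d co)
              - ((a.factorial * (b+2).factorial : ℕ) : ℂ) * 0 := by
            simp only [hw]
            rw [if_neg (by omega), if_neg (by omega)]
          rw [hw'] at hspec
          linear_combination hspec

-- ===== kernel uniqueness =====

lemma UN {U : Set (ℝ×ℝ)} (hU : IsOpen U) {x₀ : ℝ×ℝ} (hx : x₀ ∈ U) {g : ℝ×ℝ→ℂ} {d : ℕ}
    (hd : 2 ≤ d) (hg : ContDiffOn ℝ ((d-2:ℕ)) g U) {p : MP} (hdp : p.totalDegree ≤ d)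
    (heq : ∀ a b, a + b ≤ d - 2 →
      tval x₀ (a+2) b p + tval x₀ a (b+2) p + Phi g x₀ a b p = 0)
    (h0 : ∀ n, n ≤ d → tval x₀ 0 n p = 0)
    (h1 : ∀ n, n + 1 ≤ d → tval x₀ 1 n p = 0) :
    p = 0 := by
  obtain ⟨co, rfl⟩ := rep x₀ hdp
  suffices hco : ∀ j, ∀ m n, m + n ≤ j → m + n ≤ d → co m n = 0 by
    unfold Pc
    apply Finset.sum_eq_zero
    intro q hq
    rw [hco d q.1 q.2 (mem_Idx.mp hq) (mem_Idx.mp hq), zero_smul]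
  intro j
  induction j using Nat.strong_induction_on with
  | _ j ihj =>
    intro m n hmn hmd
    rcases Nat.lt_or_ge (m+n) j with hlt | hge
    · exact ihj (m+n) hlt m n le_rfl hmd
    have hj : m + n = j := by omega
    have inner : ∀ mm nn : ℕ, mm + nn = j → mm + nn ≤ d → co mm nn = 0 := by
      intro mm
      induction mm using Nat.strong_induction_on with
      | _ mm ihm =>
        intro nn hj' hmd'
        rcases Nat.lt_or_ge mm 2 with hm2 | hm2
        · interval_cases mm
          · have := h0 nn (by omega)
            rw [tval_Pc_le x₀ (by omega) co] at this
            exact (mul_eq_zero.mp this).resolve_left (fact2_ne 0 nn)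
          · have := h1 nn (by omega)
            rw [tval_Pc_le x₀ (by omega) co] at this
            exact (mul_eq_zero.mp this).resolve_left (fact2_ne 1 nn)
        · obtain ⟨m', rfl⟩ : ∃ m', mm = m' + 2 := ⟨mm - 2, by omega⟩
          have habd : m' + nn ≤ d - 2 := by omega
          have hPhi : Phi g x₀ m' nn (Pc x₀ d co) = 0 := by
            refine Phi_vanish hU hx (hg.of_le (by exact_mod_cast habd)) ?_
            intro i k hik
            rcases Nat.lt_or_ge d (i+k) with hgt | hle
            · exact tval_Pc_gt x₀ hgt co
            · rw [tval_Pc_le x₀ hle co]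
              rw [ihj (i+k) (by omega) i k le_rfl hle, mul_zero]
          have hco2 : co m' (nn+2) = 0 := ihm m' (by omega) (nn+2) (by omega) (by omega)
          have := heq m' nn habd
          rw [tval_Pc_le x₀ (by omega) co, tval_Pc_le x₀ (by omega) co, hPhi, hco2] at this
          have hne := fact2_ne (m'+2) nn
          have h5 : (((m'+2).factorial * nn.factorial : ℕ) : ℂ) * co (m'+2) nn = 0 := by
            linear_combination this
          exact (mul_eq_zero.mp h5).resolve_left hne
    exact inner m n hj hmd

end Helm

open Helm

/-- The map `Q : ℙ^d → ℙ^{d-2}`, `Q(p) = 𝒯_{d-2}(Δp + (ω²/c²) p)`, is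
surjective (for every `r ∈ ℙ^{d-2}` there is `p ∈ ℙ^d` with `𝒯_{d-2}(Δp + (ω²/c²)p - r) = 0`),
and its kernel has dimension `(d+1)(d+2)/2 - (d-1)d/2 = 2d+1`: it admits a linearly
independent spanning family of cardinality `2d+1`. -/
theorem truncated_helmholtz_operator_surjective
    (x₀ : ℝ × ℝ) (d : ℕ) (hd : 2 ≤ d)
    (ω ρ : ℝ) (hρ : 0 < ρ)
    (c : ℝ × ℝ → ℝ) (hc : ContDiffAt ℝ (d - 2) c x₀) (hc0 : c x₀ ≠ 0) :
    (∀ r : MvPolynomial (Fin 2) ℂ, r.totalDegree ≤ d - 2 →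
      ∃ p : MvPolynomial (Fin 2) ℂ, p.totalDegree ≤ d ∧
        taylorZero (d - 2)
          (fun x => (pd 0 (pd 0 (pev p)) x + pd 1 (pd 1 (pev p)) x)
              + ((ω : ℂ) ^ 2 / (c x : ℂ) ^ 2) * pev p x - pev r x) x₀) ∧
    ((d + 1) * (d + 2) / 2 - (d - 1) * d / 2 = 2 * d + 1) ∧
    (∃ b : Fin (2 * d + 1) → MvPolynomial (Fin 2) ℂ,
      LinearIndependent ℂ b ∧
      (∀ i, (b i).totalDegree ≤ d ∧
        taylorZero (d - 2)
          (fun x => (pd 0 (pd 0 (pev (b i))) x + pd 1 (pd 1 (pev (b i))) x)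
              + ((ω : ℂ) ^ 2 / (c x : ℂ) ^ 2) * pev (b i) x) x₀) ∧
      (∀ p : MvPolynomial (Fin 2) ℂ, p.totalDegree ≤ d →
        taylorZero (d - 2)
          (fun x => (pd 0 (pd 0 (pev p)) x + pd 1 (pd 1 (pev p)) x)
              + ((ω : ℂ) ^ 2 / (c x : ℂ) ^ 2) * pev p x) x₀ →
        p ∈ Submodule.span ℂ (Set.range b))) := by
    -- setup : smoothness of the coefficient function near x₀
  have hc' : ContDiffAt ℝ ((d-2:ℕ)) c x₀ := by
    refine hc.of_le ?_
    have h : ((d - 2 : ℕ) : WithTop ℕ∞) = (d : WithTop ℕ∞) - 2 := by norm_cast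
    rw [h]
  have h1 : ContDiffAt ℝ ((d-2:ℕ)) (fun x : ℝ×ℝ => ((c x : ℝ) : ℂ)) x₀ :=
    Complex.ofRealCLM.contDiff.contDiffAt.comp x₀ hc'
  have h2 : ContDiffAt ℝ ((d-2:ℕ)) (fun x : ℝ×ℝ => ((c x : ℝ) : ℂ)^2) x₀ := h1.pow 2
  have hne2 : ((c x₀ : ℝ) : ℂ)^2 ≠ 0 := pow_ne_zero 2 (Complex.ofReal_ne_zero.mpr hc0)
  have h3 : ContDiffAt ℝ ((d-2:ℕ)) (fun x : ℝ×ℝ => (ω : ℂ)^2 / ((c x : ℝ) : ℂ)^2) x₀ := by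
    have hfe : (fun x : ℝ×ℝ => (ω : ℂ)^2 / ((c x : ℝ) : ℂ)^2)
        = fun x : ℝ×ℝ => (ω : ℂ)^2 * (((c x : ℝ) : ℂ)^2)⁻¹ := by
      funext x; rw [div_eq_mul_inv]
    rw [hfe]
    exact contDiffAt_const.mul (h2.inv hne2)
  obtain ⟨u, hu, hcd⟩ := h3.contDiffOn le_rfl (by simp)
  have hU : IsOpen (interior u) := isOpen_interior
  have hx : x₀ ∈ interior u := mem_interior_iff_mem_nhds.mpr hu
  have hg : ContDiffOn ℝ ((d-2:ℕ)) (fun x : ℝ×ℝ => (ω : ℂ)^2 / ((c x : ℝ) : ℂ)^2)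
      (interior u) := hcd.mono interior_subset
  refine ⟨?_, ?_, ?_⟩
  · -- surjectivity
    intro r _
    obtain ⟨p, hdp, _, heq⟩ := MAIN hU hx hd hg (d-1) 0 (by omega)
      (fun a b => tval x₀ a b r) (fun a b _ hlt => absurd hlt (Nat.not_lt_zero _))
    refine ⟨p, hdp, ?_⟩
    intro a b hab
    have hD := DEC hU hx hg hab p r
    unfold iterPD at hD
    rw [hD, heq a b hab]
    ring
  · -- dimension count
    obtain ⟨k1, hk1⟩ := Nat.even_mul_succ_self (d+1)
    obtain ⟨k2, hk2⟩ := Nat.even_mul_succ_self (d-1)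
    have hd1 : (d - 1) * d = (d-1) * ((d-1)+1) := by congr 1; omega
    have hrel : (d+1)*(d+2) = (d-1)*d + (4*d + 2) := by
      obtain ⟨e, rfl⟩ : ∃ e, d = e + 2 := ⟨d-2, by omega⟩
      simp only [show e + 2 - 1 = e + 1 from rfl]
      ring
    have hk1' : (d+1)*(d+2) = k1 + k1 := hk1
    have hk2' : (d-1)*d = k2 + k2 := by rw [hd1]; exact hk2
    rw [hk1', hk2']
    rw [hk1', hk2'] at hrel
    omega
  · -- kernel basis
    choose bfam hdeg hker hfree0 hfree1 using fun i : Fin (2*d+1) =>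
      EX hU hx hd hg (fun n => if (i:ℕ) ≤ d ∧ n = (i:ℕ) then 1 else 0)
        (fun n => if d < (i:ℕ) ∧ n + (d+1) = (i:ℕ) then 1 else 0)
    have hker' : ∀ i, taylorZero (d - 2)
        (fun x => (pd 0 (pd 0 (pev (bfam i))) x + pd 1 (pd 1 (pev (bfam i))) x)
            + ((ω : ℂ) ^ 2 / (c x : ℂ) ^ 2) * pev (bfam i) x) x₀ := by
      intro i a b hab
      have hfe : (fun x => (pd 0 (pd 0 (pev (bfam i))) x + pd 1 (pd 1 (pev (bfam i))) x)
            + ((ω : ℂ) ^ 2 / (c x : ℂ) ^ 2) * pev (bfam i) x)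
          = (fun x => (pd 0 (pd 0 (pev (bfam i))) x + pd 1 (pd 1 (pev (bfam i))) x)
            + ((ω : ℂ) ^ 2 / (c x : ℂ) ^ 2) * pev (bfam i) x - pev 0 x) := by
        funext x; rw [pev_zero, sub_zero]
      rw [hfe]
      have hD := DEC hU hx hg hab (bfam i) 0
      unfold iterPD at hD
      rw [hD, tval_zero, hker i a b hab]
      ring
    -- helper : value of free coordinates of the family
    have hval0 : ∀ (i : Fin (2*d+1)) (n : ℕ), n ≤ d →
        tval x₀ 0 n (bfam i) = if (i:ℕ) = n then (n.factorial : ℂ) else 0 := by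
      intro i n hn
      rw [hfree0 i n hn]
      by_cases hi : (i:ℕ) ≤ d ∧ n = (i:ℕ)
      · rw [if_pos hi, if_pos hi.2.symm, mul_one]
      · rw [if_neg hi, mul_zero, if_neg ?_]
        intro hcon
        exact hi ⟨by omega, hcon.symm⟩
    have hval1 : ∀ (i : Fin (2*d+1)) (n : ℕ), n + 1 ≤ d →
        tval x₀ 1 n (bfam i) = if (i:ℕ) = n + (d+1) then (n.factorial : ℂ) else 0 := by
      intro i n hn
      rw [hfree1 i n hn]
      by_cases hi : d < (i:ℕ) ∧ n + (d+1) = (i:ℕ)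
      · rw [if_pos hi, if_pos hi.2.symm, mul_one]
      · rw [if_neg hi, mul_zero, if_neg ?_]
        intro hcon
        exact hi ⟨by omega, hcon.symm⟩
    refine ⟨bfam, ?_, fun i => ⟨hdeg i, hker' i⟩, ?_⟩
    · -- linear independence
      rw [Fintype.linearIndependent_iff]
      intro gco hsum i0
      rcases le_or_gt (i0:ℕ) d with hle | hgt
      · have h4 := congrArg (tval x₀ 0 (i0:ℕ)) hsum
        rw [tval_sum, tval_zero] at h4
        simp only [tval_smul] at h4
        rw [Finset.sum_eq_single i0] at h4
        · rw [hval0 i0 (i0:ℕ) hle, if_pos rfl] at h4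
          have := fact2_ne 0 (i0:ℕ)
          simp only [Nat.factorial_zero, one_mul] at this
          rcases mul_eq_zero.mp h4 with h | h
          · exact h
          · exact absurd h this
        · intro i _ hne
          rw [hval0 i (i0:ℕ) hle, if_neg (fun hcon => hne (Fin.ext (by omega))), mul_zero]
        · intro h; exact absurd (Finset.mem_univ i0) h
      · have hn1 : (i0:ℕ) - (d+1) + 1 ≤ d := by omega
        have h4 := congrArg (tval x₀ 1 ((i0:ℕ) - (d+1))) hsum
        rw [tval_sum, tval_zero] at h4
        simp only [tval_smul] at h4
        rw [Finset.sum_eq_single i0] at h4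
        · rw [hval1 i0 _ hn1, if_pos (by omega)] at h4
          have := fact2_ne 0 ((i0:ℕ) - (d+1))
          simp only [Nat.factorial_zero, one_mul] at this
          rcases mul_eq_zero.mp h4 with h | h
          · exact h
          · exact absurd h this
        · intro i _ hne
          rw [hval1 i _ hn1, if_neg (fun hcon => hne (Fin.ext (by omega))), mul_zero]
        · intro h; exact absurd (Finset.mem_univ i0) h
    · -- spanning
      intro p hdp htz
      have heqp : ∀ a b, a + b ≤ d - 2 →
          tval x₀ (a+2) b p + tval x₀ a (b+2) p
            + Phi (fun x : ℝ×ℝ => (ω : ℂ)^2 / ((c x : ℝ) : ℂ)^2) x₀ a b p = 0 := by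
        intro a b hab
        have h4 := htz a b hab
        have hfe : (fun x => (pd 0 (pd 0 (pev p)) x + pd 1 (pd 1 (pev p)) x)
              + ((ω : ℂ) ^ 2 / (c x : ℂ) ^ 2) * pev p x)
            = (fun x => (pd 0 (pd 0 (pev p)) x + pd 1 (pd 1 (pev p)) x)
              + ((ω : ℂ) ^ 2 / (c x : ℂ) ^ 2) * pev p x - pev 0 x) := by
          funext x; rw [pev_zero, sub_zero]
        rw [hfe] at h4
        have hD := DEC hU hx hg hab p 0
        unfold iterPD at hD
        rw [hD, tval_zero] at h4
        linear_combination h4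
      set cf : Fin (2*d+1) → ℂ := fun i =>
        if (i:ℕ) ≤ d then tval x₀ 0 (i:ℕ) p / ((i:ℕ).factorial : ℂ)
        else tval x₀ 1 ((i:ℕ) - (d+1)) p / (((i:ℕ) - (d+1)).factorial : ℂ) with hcf
      set q : MvPolynomial (Fin 2) ℂ := p - ∑ i : Fin (2*d+1), cf i • bfam i with hqdef
      have hfact_ne : ∀ n : ℕ, ((n.factorial : ℕ) : ℂ) ≠ 0 := fun n =>
        Nat.cast_ne_zero.mpr (Nat.factorial_ne_zero n)
      -- q has all free coordinates zero
      have hq0 : ∀ n, n ≤ d → tval x₀ 0 n q = 0 := by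
        intro n hn
        rw [hqdef, tval_sub, tval_sum]
        simp only [tval_smul]
        set i0 : Fin (2*d+1) := ⟨n, by omega⟩ with hi0
        have hv : (i0:ℕ) = n := rfl
        rw [Finset.sum_eq_single i0]
        · rw [hval0 i0 n hn, if_pos hv]
          simp only [hcf]
          rw [if_pos (show (i0:ℕ) ≤ d from hn)]
          rw [div_mul_cancel₀ _ (hfact_ne n), sub_self]
        · intro i _ hne
          rw [hval0 i n hn, if_neg (fun hcon => hne (Fin.ext (by rw [hcon, hv]))), mul_zero]
        · intro h; exact absurd (Finset.mem_univ _) h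
      have hq1 : ∀ n, n + 1 ≤ d → tval x₀ 1 n q = 0 := by
        intro n hn
        rw [hqdef, tval_sub, tval_sum]
        simp only [tval_smul]
        set i0 : Fin (2*d+1) := ⟨n + (d+1), by omega⟩ with hi0
        have hv : (i0:ℕ) = n + (d+1) := rfl
        rw [Finset.sum_eq_single i0]
        · rw [hval1 i0 n hn, if_pos hv]
          simp only [hcf]
          rw [if_neg (show ¬ (i0:ℕ) ≤ d from by omega)]
          rw [Nat.add_sub_cancel]
          rw [div_mul_cancel₀ _ (hfact_ne n), sub_self]
        · intro i _ hne
          rw [hval1 i n hn, if_neg (fun hcon => hne (Fin.ext (by rw [hcon, hv]))), mul_zero]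
        · intro h; exact absurd (Finset.mem_univ _) h
      -- q is in the kernel
      have hqdeg : q.totalDegree ≤ d := by
        rw [hqdef]
        refine (MvPolynomial.totalDegree_sub _ _).trans (max_le hdp ?_)
        refine (MvPolynomial.totalDegree_finset_sum _ _).trans (Finset.sup_le fun i _ => ?_)
        exact (MvPolynomial.totalDegree_smul_le _ _).trans (hdeg i)
      have hqeq : ∀ a b, a + b ≤ d - 2 →
          tval x₀ (a+2) b q + tval x₀ a (b+2) q
            + Phi (fun x : ℝ×ℝ => (ω : ℂ)^2 / ((c x : ℝ) : ℂ)^2) x₀ a b q = 0 := by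
        intro a b hab
        have hgab : ContDiffOn ℝ ((a+b:ℕ))
            (fun x : ℝ×ℝ => (ω : ℂ)^2 / ((c x : ℝ) : ℂ)^2) (interior u) :=
          hg.of_le (by exact_mod_cast hab)
        rw [hqdef, tval_sub, tval_sub, Phi_sub hU hx hgab, tval_sum, tval_sum,
          Phi_sum hU hx hgab]
        simp only [tval_smul, Phi_smul hU hx hgab]
        have hz : ∑ i : Fin (2*d+1), cf i * (tval x₀ (a+2) b (bfam i)
            + tval x₀ a (b+2) (bfam i)
            + Phi (fun x : ℝ×ℝ => (ω : ℂ)^2 / ((c x : ℝ) : ℂ)^2) x₀ a b (bfam i)) = 0 :=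
          Finset.sum_eq_zero fun i _ => by rw [hker i a b hab, mul_zero]
        have hcollect : ∑ i : Fin (2*d+1), cf i * tval x₀ (a+2) b (bfam i)
            + ∑ i : Fin (2*d+1), cf i * tval x₀ a (b+2) (bfam i)
            + ∑ i : Fin (2*d+1), cf i
              * Phi (fun x : ℝ×ℝ => (ω : ℂ)^2 / ((c x : ℝ) : ℂ)^2) x₀ a b (bfam i)
            = ∑ i : Fin (2*d+1), cf i * (tval x₀ (a+2) b (bfam i)
              + tval x₀ a (b+2) (bfam i)
              + Phi (fun x : ℝ×ℝ => (ω : ℂ)^2 / ((c x : ℝ) : ℂ)^2) x₀ a b (bfam i)) := by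
          rw [← Finset.sum_add_distrib, ← Finset.sum_add_distrib]
          exact Finset.sum_congr rfl fun i _ => by ring
        linear_combination heqp a b hab - (hcollect.trans hz)
      have hq : q = 0 := UN hU hx hd hg hqdeg hqeq hq0 hq1
      have hp : p = ∑ i : Fin (2*d+1), cf i • bfam i := by
        have := sub_eq_zero.mp (hqdef ▸ hq)
        exact this
      rw [hp]
      exact Submodule.sum_mem _ fun i _ =>
        Submodule.smul_mem _ _ (Submodule.subset_span ⟨i, rfl⟩)
end
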